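/- arXiv:0810.3755 — 3 statements merged into one kernel-verified Lean document; each statement's English description precedes it below -/
import Mathlib

section
/- Let ζ_i: J_i → X (i = 1, 2) be B-contracting geodesics in a proper CAT(0)-space X and let x ∈ X be such that τ_B(x, ζ₁, ζ₂) > 0. Then d(π_{ζ₁(J₁)}(x), π_{ζ₂(J₂)}(x)) ≤ 24B + 8. -/
open Metric Set Filter Topology
open scoped ENNReal Classical Pointwise

noncomputable section

universe u

/-! ## Proper CAT(0) spaces -/

/-- A geodesic metric space satisfying the CAT(0) comparison inequality
(in the form of the Bruhat–Tits CN-inequality for midpoints). -/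
class CAT0Space (X : Type u) [MetricSpace X] : Prop where
  exists_geodesic : ∀ x y : X, ∃ γ : ℝ → X, γ 0 = x ∧ γ (dist x y) = y ∧
    ∀ s ∈ Set.Icc (0 : ℝ) (dist x y), ∀ t ∈ Set.Icc (0 : ℝ) (dist x y),
      dist (γ s) (γ t) = |s - t|
  cn_ineq : ∀ x y z m : X, dist y m = dist y z / 2 → dist z m = dist y z / 2 →
    dist x m ^ 2 ≤ dist x y ^ 2 / 2 + dist x z ^ 2 / 2 - dist y z ^ 2 / 4

variable {X : Type u} [MetricSpace X]

/-- `γ` restricted to the (closed connected) set `J ⊆ ℝ` is a unit-speed geodesic. -/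
def GeodesicOn (γ : ℝ → X) (J : Set ℝ) : Prop :=
  ∀ s ∈ J, ∀ t ∈ J, dist (γ s) (γ t) = |s - t|

/-- The set of points of `A` closest to `x` (the shortest-distance projection of `x` to `A`). -/
def projSet (A : Set X) (x : X) : Set X :=
  {p | p ∈ A ∧ dist x p = Metric.infDist x A}

/-- A geodesic `γ : J → X` is `B`-contracting if the shortest-distance projection to it of
any closed metric ball disjoint from it has diameter at most `B`. -/
def ContractingOn (B : ℝ) (γ : ℝ → X) (J : Set ℝ) : Prop :=
  GeodesicOn γ J ∧ ∀ (z : X) (r : ℝ),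
    Disjoint (Metric.closedBall z r) (γ '' J) →
    EMetric.diam (⋃ x ∈ Metric.closedBall z r, projSet (γ '' J) x) ≤ ENNReal.ofReal B

/-! ## The visual boundary, realized as the horofunction boundary inside `C(X, ℝ)`
(for proper CAT(0)-spaces the two compactifications agree). -/

/-- The embedding `x ↦ (z ↦ d(x,z) - d(x,o))` of `X` into `C(X, ℝ)`. -/
def bcomp (o : X) (x : X) : C(X, ℝ) :=
  ⟨fun z => dist x z - dist x o, (continuous_const.dist continuous_id).sub continuous_const⟩

/-- The compactification `X ∪ ∂X` of `X`, realized inside `C(X, ℝ)`. -/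
def compactifn (o : X) : Set C(X, ℝ) := closure (Set.range (bcomp o))

/-- The visual boundary `∂X` of `X`, realized inside `C(X, ℝ)` as the set of
(normalized) Busemann functions. -/
def bdry (o : X) : Set C(X, ℝ) := closure (Set.range (bcomp o)) \ Set.range (bcomp o)

/-- The natural action of an isometry `g` of `X` on the compactification; on boundary points
it is the induced boundary homeomorphism. -/
def boundaryAct (o : X) (g : X ≃ᵢ X) (ξ : C(X, ℝ)) : C(X, ℝ) :=
  ⟨fun z => ξ (g.symm z) - ξ (g.symm o),
    (ξ.continuous.comp g.symm.continuous).sub continuous_const⟩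

/-- `γ(-∞) = ξ`: the geodesic `γ` emanates from the boundary point `ξ`. -/
def BeginsAt (o : X) (γ : ℝ → X) (ξ : C(X, ℝ)) : Prop :=
  Filter.Tendsto (fun t => bcomp o (γ t)) Filter.atBot (nhds ξ)

/-- `γ(∞) = ξ`: the geodesic (ray) `γ` ends at the boundary point `ξ`. -/
def EndsAt (o : X) (γ : ℝ → X) (ξ : C(X, ℝ)) : Prop :=
  Filter.Tendsto (fun t => bcomp o (γ t)) Filter.atTop (nhds ξ)

/-- The set of (forward or backward) endpoints at infinity of a geodesic. -/
def endpointsSet (o : X) (γ : ℝ → X) : Set C(X, ℝ) :=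
  {ξ | EndsAt o γ ξ ∨ BeginsAt o γ ξ}

/-- Two geodesics share at most one endpoint in `∂X`. -/
def ShareAtMostOneEnd (o : X) (ζ₁ ζ₂ : ℝ → X) : Prop :=
  Set.Subsingleton (endpointsSet o ζ₁ ∩ endpointsSet o ζ₂)

/-- The shortest-distance projection of a boundary point `ξ` to a geodesic `γ : J → X`:
the set of points of `γ(J)` where the Busemann function of `ξ` restricted to `γ(J)`
attains its minimum. -/
def projSetBdry (γ : ℝ → X) (J : Set ℝ) (ξ : C(X, ℝ)) : Set X :=
  {y | ∃ t ∈ J, y = γ t ∧ ∀ s ∈ J, ξ (γ t) ≤ ξ (γ s)}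

/-! ## The isometry group with the compact-open topology -/

instance isometryEquivTopologicalSpace (X : Type u) [MetricSpace X] :
    TopologicalSpace (X ≃ᵢ X) :=
  TopologicalSpace.induced
    (fun g : X ≃ᵢ X =>
      ((⟨⇑g, g.continuous⟩ : C(X, X)), (⟨⇑g.symm, g.symm.continuous⟩ : C(X, X))))
    inferInstance

/-- The limit set of a subgroup of the isometry group: the set of accumulation points in
`∂X` of an orbit. -/
def limitSet (o : X) (Gs : Subgroup (X ≃ᵢ X)) : Set C(X, ℝ) :=
  bdry o ∩ closure (Set.range fun g : Gs => bcomp o ((g : X ≃ᵢ X) o))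

/-- A subgroup of the isometry group is non-elementary if its limit set contains at least
three points and it fixes no point of `∂X`. -/
def IsNonElementary (o : X) (Gs : Subgroup (X ≃ᵢ X)) : Prop :=
  (∃ a ∈ limitSet o Gs, ∃ b ∈ limitSet o Gs, ∃ c ∈ limitSet o Gs, a ≠ b ∧ a ≠ c ∧ b ≠ c) ∧
  ¬ ∃ ξ ∈ bdry o, ∀ g : Gs, boundaryAct o (g : X ≃ᵢ X) ξ = ξ

/-- A subgroup of the isometry group is elementary if its limit set contains at most two
points or it fixes a point of `∂X`. -/
def IsElementary (o : X) (Gs : Subgroup (X ≃ᵢ X)) : Prop :=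
  (∃ a b : C(X, ℝ), limitSet o Gs ⊆ {a, b}) ∨
  ∃ ξ ∈ bdry o, ∀ g : Gs, boundaryAct o (g : X ≃ᵢ X) ξ = ξ

/-- A rank-one isometry: an axial isometry admitting a `B`-contracting axis for some `B > 0`. -/
def IsRankOneIsom (g : X ≃ᵢ X) : Prop :=
  ∃ (γ : ℝ → X) (τ B : ℝ), 0 < τ ∧ 0 < B ∧ ContractingOn B γ Set.univ ∧
    (∀ t : ℝ, g (γ t) = γ (t + τ)) ∧ ∀ x : X, τ ≤ dist x (g x)

/-- A rank-one isometry together with its attracting fixed point `a` and repelling fixed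
point `b` at infinity (the endpoints of a contracting axis). -/
def IsRankOneWithEnds (o : X) (g : X ≃ᵢ X) (a b : C(X, ℝ)) : Prop :=
  ∃ (γ : ℝ → X) (τ B : ℝ), 0 < τ ∧ 0 < B ∧ ContractingOn B γ Set.univ ∧
    (∀ t : ℝ, g (γ t) = γ (t + τ)) ∧ (∀ x : X, τ ≤ dist x (g x)) ∧
    BeginsAt o γ b ∧ EndsAt o γ a

/-- `G` acts transitively on the complement of the diagonal in `Λ × Λ`. -/
def TransOnPairs (o : X) (Gs : Subgroup (X ≃ᵢ X)) : Prop :=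
  ∀ ξ η ξ' η' : C(X, ℝ), ξ ∈ limitSet o Gs → η ∈ limitSet o Gs →
    ξ' ∈ limitSet o Gs → η' ∈ limitSet o Gs → ξ ≠ η → ξ' ≠ η' →
    ∃ g ∈ Gs, boundaryAct o g ξ = ξ' ∧ boundaryAct o g η = η'

/-- The set `𝒜(B)` of ordered pairs of distinct boundary points which are connected by a
`B`-contracting geodesic. -/
def ABSet (o : X) (B : ℝ) : Set (C(X, ℝ) × C(X, ℝ)) :=
  {p | p.1 ≠ p.2 ∧ ∃ γ : ℝ → X, ContractingOn B γ Set.univ ∧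
    BeginsAt o γ p.1 ∧ EndsAt o γ p.2}

/-- The action of an isometry on ordered pairs of boundary points. -/
def pairAct (o : X) (g : X ≃ᵢ X) (p : C(X, ℝ) × C(X, ℝ)) : C(X, ℝ) × C(X, ℝ) :=
  (boundaryAct o g p.1, boundaryAct o g p.2)

/-- The action of an isometry on triples of boundary points. -/
def tripleAct (o : X) (g : X ≃ᵢ X) (t : C(X, ℝ) × C(X, ℝ) × C(X, ℝ)) :
    C(X, ℝ) × C(X, ℝ) × C(X, ℝ) :=
  (boundaryAct o g t.1, boundaryAct o g t.2.1, boundaryAct o g t.2.2)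

/-! ## The quantity `τ_B` -/

/-- The set of parameters where `ζ₁` is `(6B+2)`-close to `ζ₂(J₂)`. -/
def nearSet (B : ℝ) (ζ₁ : ℝ → X) (J₁ : Set ℝ) (ζ₂ : ℝ → X) (J₂ : Set ℝ) : Set ℝ :=
  {t | t ∈ J₁ ∧ Metric.infDist (ζ₁ t) (ζ₂ '' J₂) ≤ 6 * B + 2}

/-- The parameter of the shortest-distance projection of `x` to the geodesic `γ : J → X`
(the projection point is unique in a CAT(0)-space). -/
def projParam (γ : ℝ → X) (J : Set ℝ) (x : X) : ℝ :=
  sInf {t | t ∈ J ∧ dist x (γ t) = Metric.infDist x (γ '' J)}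

/-- The quantity `τ_B(x, ζ₁, ζ₂)` of the paper, measuring the overlap, as seen from the
projections of `x`, of the `(6B+2)`-fellow-travelling portions of the oriented geodesics
`ζ₁ : J₁ → X` and `ζ₂ : J₂ → X`. -/
def tauB (B : ℝ) (x : X) (ζ₁ : ℝ → X) (J₁ : Set ℝ) (ζ₂ : ℝ → X) (J₂ : Set ℝ) : ℝ :=
  let N₁ := nearSet B ζ₁ J₁ ζ₂ J₂
  let N₂ := nearSet B ζ₂ J₂ ζ₁ J₁
  let p₁ := projParam ζ₁ J₁ x
  let p₂ := projParam ζ₂ J₂ x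
  let aE : Set ℝ → EReal := fun N => if BddBelow N then ((sInf N : ℝ) : EReal) else ⊥
  let bE : Set ℝ → EReal := fun N => if BddAbove N then ((sSup N : ℝ) : EReal) else ⊤
  let s₁ : EReal := if BddBelow N₂ then ((projParam ζ₁ J₁ (ζ₂ (sInf N₂)) : ℝ) : EReal) else ⊥
  let t₁ : EReal := if BddAbove N₂ then ((projParam ζ₁ J₁ (ζ₂ (sSup N₂)) : ℝ) : EReal) else ⊤
  let s₂ : EReal := if BddBelow N₁ then ((projParam ζ₂ J₂ (ζ₁ (sInf N₁)) : ℝ) : EReal) else ⊥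
  let t₂ : EReal := if BddAbove N₁ then ((projParam ζ₂ J₂ (ζ₁ (sSup N₁)) : ℝ) : EReal) else ⊤
  let dA₁ : ℝ≥0∞ := if BddBelow N₁ then ENNReal.ofReal (dist (ζ₁ p₁) (ζ₁ (sInf N₁))) else ⊤
  let dB₁ : ℝ≥0∞ := if BddAbove N₁ then ENNReal.ofReal (dist (ζ₁ p₁) (ζ₁ (sSup N₁))) else ⊤
  let dA₂ : ℝ≥0∞ := if BddBelow N₂ then ENNReal.ofReal (dist (ζ₂ p₂) (ζ₂ (sInf N₂))) else ⊤
  let dB₂ : ℝ≥0∞ := if BddAbove N₂ then ENNReal.ofReal (dist (ζ₂ p₂) (ζ₂ (sSup N₂))) else ⊤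
  if N₁.Nonempty ∧ N₂.Nonempty ∧ s₁ < t₁ ∧ s₂ < t₂ ∧
      aE N₁ ≤ (p₁ : EReal) ∧ (p₁ : EReal) ≤ bE N₁ ∧
      aE N₂ ≤ (p₂ : EReal) ∧ (p₂ : EReal) ≤ bE N₂ then
    (min (min dA₁ dB₁) (min dA₂ dB₂)).toReal
  else 0

/-- `τ_B(x, α₁, α₂)` for pairs `α₁, α₂ ∈ 𝒜(B)`: the infimum of `τ_B(x, ζ₁, ζ₂)` over all
`B`-contracting geodesics `ζᵢ` connecting the two components of `αᵢ`. -/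
def tauBPair (o : X) (B : ℝ) (x : X) (α₁ α₂ : C(X, ℝ) × C(X, ℝ)) : ℝ :=
  sInf {r | ∃ ζ₁ ζ₂ : ℝ → X,
    ContractingOn B ζ₁ Set.univ ∧ BeginsAt o ζ₁ α₁.1 ∧ EndsAt o ζ₁ α₁.2 ∧
    ContractingOn B ζ₂ Set.univ ∧ BeginsAt o ζ₂ α₂.1 ∧ EndsAt o ζ₂ α₂.2 ∧
    r = tauB B x ζ₁ Set.univ ζ₂ Set.univ}

/-- The Gromov-product-like kernel `δ̃_x(α₁, α₂) = e^{-χ τ_B(x, α₁, α₂)}` on `𝒜(B)`. -/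
def tildeDelta (o : X) (B χ : ℝ) (x : X) (α β : C(X, ℝ) × C(X, ℝ)) : ℝ :=
  if α = β then 0 else Real.exp (-(χ * tauBPair o B x α β))

/-- The family of distances `{δ_x}` on `𝒜(B)` of Corollary `deltadistance`:
a family of genuine distance functions inducing the subspace topology, invariant under the
involution `ι` and the isometry group, uniformly comparable to `δ̃_x`, and moving
uniformly Lipschitz-continuously (in the multiplicative sense) with the basepoint `x`. -/
def IsDeltaFamily (o : X) (B χ c₀ : ℝ)
    (δ : X → ↥(ABSet o B) → ↥(ABSet o B) → ℝ) : Prop :=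
  (∀ x α β, 0 ≤ δ x α β) ∧
  (∀ x α β, δ x α β = 0 ↔ α = β) ∧
  (∀ x α β, δ x α β = δ x β α) ∧
  (∀ x α β γ', δ x α γ' ≤ δ x α β + δ x β γ') ∧
  (∀ (x : X) (s : Set ↥(ABSet o B)),
      IsOpen s ↔ ∀ a ∈ s, ∃ ε > 0, ∀ b, δ x a b < ε → b ∈ s) ∧
  (∀ (x : X) (a : ↥(ABSet o B)), ∃ ε > 0, IsCompact {b | δ x a b ≤ ε}) ∧
  (∀ (x : X) (α β : ↥(ABSet o B)) (hα : ((α : C(X, ℝ) × C(X, ℝ)).2,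
      (α : C(X, ℝ) × C(X, ℝ)).1) ∈ ABSet o B)
      (hβ : ((β : C(X, ℝ) × C(X, ℝ)).2, (β : C(X, ℝ) × C(X, ℝ)).1) ∈ ABSet o B),
      δ x ⟨((α : C(X, ℝ) × C(X, ℝ)).2, (α : C(X, ℝ) × C(X, ℝ)).1), hα⟩
        ⟨((β : C(X, ℝ) × C(X, ℝ)).2, (β : C(X, ℝ) × C(X, ℝ)).1), hβ⟩ = δ x α β) ∧
  (∀ (x : X) (α β : ↥(ABSet o B)),
      c₀ * tildeDelta o B χ x (↑α) (↑β) ≤ δ x α β ∧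
      δ x α β ≤ tildeDelta o B χ x (↑α) (↑β)) ∧
  (∀ (x y : X) (α β : ↥(ABSet o B)),
      Real.exp (-(χ * dist x y)) * δ x α β ≤ δ y α β ∧
      δ y α β ≤ Real.exp (χ * dist x y) * δ x α β) ∧
  (∀ (g : X ≃ᵢ X) (x : X) (α β : ↥(ABSet o B))
      (hα : pairAct o g (↑α) ∈ ABSet o B) (hβ : pairAct o g (↑β) ∈ ABSet o B),
      δ (g x) ⟨pairAct o g (↑α), hα⟩ ⟨pairAct o g (↑β), hβ⟩ = δ x α β)

/-! ## Amenability, compact extensions, Lie groups -/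

/-- A topological group is amenable if there is a left-invariant mean on the space of
bounded continuous real functions. -/
def IsAmenableGroup (H : Type u) [Group H] [TopologicalSpace H] : Prop :=
  ∃ m : BoundedContinuousFunction H ℝ →ₗ[ℝ] ℝ,
    m 1 = 1 ∧ (∀ f : BoundedContinuousFunction H ℝ, 0 ≤ f → 0 ≤ m f) ∧
    ∀ (g : H) (f f' : BoundedContinuousFunction H ℝ),
      (∀ x, f' x = f (g * x)) → m f' = m f

/-- A realization of a topological group `G` as a compact extension: a compact normal
subgroup `K` together with a topological group isomorphism `G ⧸ K ≃ L`. -/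
structure CompactExtension (G : Type u) [Group G] [TopologicalSpace G] where
  L : Type u
  [grp : Group L]
  [top : TopologicalSpace L]
  K : Subgroup G
  normal : K.Normal
  isCompact : IsCompact (K : Set G)
  e : (G ⧸ K) ≃* L
  continuous_e : Continuous ⇑e
  continuous_symm : Continuous ⇑e.symm

attribute [instance] CompactExtension.grp CompactExtension.top

/-- Gromov hyperbolicity via the four-point condition. -/
def GromovHyperbolicSpace (Y : Type u) [MetricSpace Y] : Prop :=
  ∃ δ : ℝ, 0 ≤ δ ∧ ∀ x y z w : Y,
    dist x y + dist z w ≤ max (dist x z + dist y w) (dist x w + dist y z) + δ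

/-- A witness that `L` is a rank-one simple Lie group: a faithful continuous, proper,
transitive, isometric action on a non-trivial Gromov hyperbolic proper CAT(0)-space
(its rank-one symmetric space). -/
structure RankOneWitness (L : Type u) [Group L] [TopologicalSpace L] where
  Y : Type u
  [ms : MetricSpace Y]
  proper : ProperSpace Y
  cat0 : CAT0Space Y
  hyperbolic : GromovHyperbolicSpace Y
  nontrivial : ∃ y₀ y₁ : Y, y₀ ≠ y₁
  act : L →* (Y ≃ᵢ Y)
  faithful : Function.Injective ⇑act
  continuous_act : Continuous fun p : L × Y => act p.1 p.2
  proper_act : ∀ K : Set Y, IsCompact K →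
    IsCompact (closure {g : L | ¬ Disjoint (⇑(act g) '' K) K})
  transitive : ∀ y y' : Y, ∃ g : L, act g y = y'

attribute [instance] RankOneWitness.ms

/-- A simple Lie group of rank one (with trivial center), characterized geometrically:
a connected, locally compact, non-compact, topologically simple group acting continuously,
faithfully, properly, transitively and isometrically on a non-trivial Gromov hyperbolic
proper CAT(0)-space. -/
def IsRankOneSimpleLie (L : Type u) [Group L] [TopologicalSpace L] : Prop :=
  IsTopologicalGroup L ∧ ConnectedSpace L ∧ LocallyCompactSpace L ∧ ¬ CompactSpace L ∧
  (∀ N : Subgroup L, N.Normal → IsClosed (N : Set L) → N = ⊥ ∨ N = ⊤) ∧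
  Nonempty (RankOneWitness L)

/-- A witness that `G` is a semisimple Lie group of rank at least two: a continuous, proper,
transitive, isometric action on a proper CAT(0)-space (its symmetric space) which contains
a 2-flat. -/
structure HigherRankWitness (G : Type u) [Group G] [TopologicalSpace G] where
  Y : Type u
  [ms : MetricSpace Y]
  proper : ProperSpace Y
  cat0 : CAT0Space Y
  act : G →* (Y ≃ᵢ Y)
  continuous_act : Continuous fun p : G × Y => act p.1 p.2
  proper_act : ∀ K : Set Y, IsCompact K →
    IsCompact (closure {g : G | ¬ Disjoint (⇑(act g) '' K) K})
  transitive : ∀ y y' : Y, ∃ g : G, act g y = y'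
  twoFlat : ∃ f : ℝ × ℝ → Y, ∀ p q : ℝ × ℝ,
    dist (f p) (f q) = Real.sqrt ((p.1 - q.1) ^ 2 + (p.2 - q.2) ^ 2)

attribute [instance] HigherRankWitness.ms

/-- A connected semisimple Lie group with finite center, no compact factors, and real rank
at least two, characterized geometrically: a connected locally compact group with finite
center whose closed normal amenable subgroups are finite, acting continuously, properly,
transitively and isometrically on a proper CAT(0)-space containing a 2-flat. -/
def IsHigherRankSemisimpleLie (G : Type u) [Group G] [TopologicalSpace G] : Prop :=
  IsTopologicalGroup G ∧ ConnectedSpace G ∧ LocallyCompactSpace G ∧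
  Finite (Subgroup.center G) ∧
  (∀ N : Subgroup G, N.Normal → IsClosed (N : Set G) → IsAmenableGroup ↥N → Finite ↥N) ∧
  Nonempty (HigherRankWitness G)

/-- A lattice in a locally compact group: a discrete subgroup of finite covolume. -/
def IsLatticeIn (G : Type u) [Group G] [TopologicalSpace G] (Γ : Subgroup G) : Prop :=
  DiscreteTopology ↥Γ ∧ IsClosed (Γ : Set G) ∧
  ∃ μ : @MeasureTheory.Measure G (borel G),
    @MeasureTheory.Measure.IsHaarMeasure G _ _ (borel G) μ ∧
    ∃ F : Set G, @MeasurableSet G (borel G) F ∧ μ F < ⊤ ∧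
      (⋃ γ ∈ Γ, (fun x => x * γ) '' F) = Set.univ

/-- An irreducible lattice: the projection of `Γ` to the quotient by every proper
(non-discrete) closed normal subgroup is dense. -/
def IsIrreducibleLattice (G : Type u) [Group G] [TopologicalSpace G] (Γ : Subgroup G) : Prop :=
  ∀ N : Subgroup G, N.Normal → IsClosed (N : Set G) → ¬ DiscreteTopology ↥N →
    Dense ((N : Set G) * (Γ : Set G))

/-! ## Bounded cohomology in degree two with coefficients in `L^p(G, μ)` -/

section Cohomology

variable {G : Type u} [Group G] [MeasurableSpace G]

/-- A bounded `G`-equivariant `L^p(G,μ)`-valued 2-cochain (for the homogeneous resolution),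
described by its values: a function `G² → L^p(G, μ)` which is uniformly `L^p`-bounded and
equivariant for the left regular representation. -/
def IsBddEquivariantCochain2 (μ : MeasureTheory.Measure G) (p : ℝ≥0∞)
    (φ : G → G → G → ℝ) : Prop :=
  (∀ g₀ g₁, MeasureTheory.MemLp (φ g₀ g₁) p μ) ∧
  (∃ C : ℝ≥0∞, C ≠ ⊤ ∧ ∀ g₀ g₁, MeasureTheory.eLpNorm (φ g₀ g₁) p μ ≤ C) ∧
  (∀ g g₀ g₁, (fun h => φ (g * g₀) (g * g₁) h) =ᵐ[μ] fun h => φ g₀ g₁ (g⁻¹ * h))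

/-- A bounded `G`-equivariant `L^p(G,μ)`-valued 3-cochain. -/
def IsBddEquivariantCochain3 (μ : MeasureTheory.Measure G) (p : ℝ≥0∞)
    (ω : G → G → G → G → ℝ) : Prop :=
  (∀ g₀ g₁ g₂, MeasureTheory.MemLp (ω g₀ g₁ g₂) p μ) ∧
  (∃ C : ℝ≥0∞, C ≠ ⊤ ∧ ∀ g₀ g₁ g₂, MeasureTheory.eLpNorm (ω g₀ g₁ g₂) p μ ≤ C) ∧
  (∀ g g₀ g₁ g₂, (fun h => ω (g * g₀) (g * g₁) (g * g₂) h) =ᵐ[μ] fun h => ω g₀ g₁ g₂ (g⁻¹ * h))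

/-- The homogeneous 2-cocycle identity. -/
def IsCocycle3 (μ : MeasureTheory.Measure G) (ω : G → G → G → G → ℝ) : Prop :=
  ∀ g₀ g₁ g₂ g₃,
    (fun h => ω g₁ g₂ g₃ h - ω g₀ g₂ g₃ h + ω g₀ g₁ g₃ h - ω g₀ g₁ g₂ h)
      =ᵐ[μ] fun _ => (0 : ℝ)

/-- `ω` is the coboundary of the 2-cochain `φ`. -/
def IsCoboundaryOf (μ : MeasureTheory.Measure G) (ω : G → G → G → G → ℝ)
    (φ : G → G → G → ℝ) : Prop :=
  ∀ g₀ g₁ g₂, ω g₀ g₁ g₂ =ᵐ[μ] fun h => φ g₁ g₂ h - φ g₀ g₂ h + φ g₀ g₁ h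

/-- Non-vanishing of `H²_b(G, L^p(G, μ))` (with `G` regarded as a discrete group):
there is a bounded equivariant cocycle which is not the coboundary of any bounded
equivariant cochain. -/
def H2bNontrivial (μ : MeasureTheory.Measure G) (p : ℝ≥0∞) : Prop :=
  ∃ ω : G → G → G → G → ℝ, IsBddEquivariantCochain3 μ p ω ∧ IsCocycle3 μ ω ∧
    ¬ ∃ φ : G → G → G → ℝ, IsBddEquivariantCochain2 μ p φ ∧ IsCoboundaryOf μ ω φ

/-- Infinite-dimensionality of `H²_b(G, L^p(G, μ))`: a sequence of bounded equivariant
cocycles whose classes are linearly independent. -/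
def H2bInfiniteDimensional (μ : MeasureTheory.Measure G) (p : ℝ≥0∞) : Prop :=
  ∃ ω : ℕ → G → G → G → G → ℝ,
    (∀ n, IsBddEquivariantCochain3 μ p (ω n) ∧ IsCocycle3 μ (ω n)) ∧
    ∀ (s : Finset ℕ) (c : ℕ → ℝ),
      (∃ φ : G → G → G → ℝ, IsBddEquivariantCochain2 μ p φ ∧
        IsCoboundaryOf μ (fun g₀ g₁ g₂ h => ∑ n ∈ s, c n * ω n g₀ g₁ g₂ h) φ) →
      ∀ n ∈ s, c n = 0

variable [TopologicalSpace G]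

/-- Continuity of a 2-cochain as a map `G² → L^p(G, μ)`. -/
def IsLpContinuous2 (μ : MeasureTheory.Measure G) (p : ℝ≥0∞) (φ : G → G → G → ℝ) : Prop :=
  ∀ t₀ : G × G, Filter.Tendsto
    (fun t : G × G => MeasureTheory.eLpNorm (fun h => φ t.1 t.2 h - φ t₀.1 t₀.2 h) p μ)
    (nhds t₀) (nhds 0)

/-- Continuity of a 3-cochain as a map `G³ → L^p(G, μ)`. -/
def IsLpContinuous3 (μ : MeasureTheory.Measure G) (p : ℝ≥0∞) (ω : G → G → G → G → ℝ) : Prop :=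
  ∀ t₀ : G × G × G, Filter.Tendsto
    (fun t : G × G × G =>
      MeasureTheory.eLpNorm (fun h => ω t.1 t.2.1 t.2.2 h - ω t₀.1 t₀.2.1 t₀.2.2 h) p μ)
    (nhds t₀) (nhds 0)

/-- Non-vanishing of the continuous bounded cohomology `H²_cb(G, L^p(G, μ))`. -/
def H2cbNontrivial (μ : MeasureTheory.Measure G) (p : ℝ≥0∞) : Prop :=
  ∃ ω : G → G → G → G → ℝ, IsBddEquivariantCochain3 μ p ω ∧ IsLpContinuous3 μ p ω ∧
    IsCocycle3 μ ω ∧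
    ¬ ∃ φ : G → G → G → ℝ, IsBddEquivariantCochain2 μ p φ ∧ IsLpContinuous2 μ p φ ∧
      IsCoboundaryOf μ ω φ

end Cohomology

/-! ## Triples and the cocycle of Theorem `cocycle` -/

/-- The set `T(B)` of triples of pairwise distinct points of the limit set whose pairs are
connected by `B`-contracting geodesics. -/
def TSet (o : X) (Gs : Subgroup (X ≃ᵢ X)) (B : ℝ) :
    Set (C(X, ℝ) × C(X, ℝ) × C(X, ℝ)) :=
  {t | t.1 ∈ limitSet o Gs ∧ t.2.1 ∈ limitSet o Gs ∧ t.2.2 ∈ limitSet o Gs ∧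
    (t.1, t.2.1) ∈ ABSet o B ∧ (t.2.1, t.2.2) ∈ ABSet o B ∧ (t.2.2, t.1) ∈ ABSet o B}

/-- The set of triples of pairwise distinct points of the limit set. -/
def TripleSet (o : X) (Gs : Subgroup (X ≃ᵢ X)) : Set (C(X, ℝ) × C(X, ℝ) × C(X, ℝ)) :=
  {t | t.1 ∈ limitSet o Gs ∧ t.2.1 ∈ limitSet o Gs ∧ t.2.2 ∈ limitSet o Gs ∧
    t.1 ≠ t.2.1 ∧ t.1 ≠ t.2.2 ∧ t.2.1 ≠ t.2.2}

/-- The 2-cocycle `ω(σ, η, β) = α(σ, η) + α(η, β) + α(β, σ)` associated to a map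
`α : 𝒜(B) → C_b(G × G)`. -/
def omegaOf {o : X} {Gs : Subgroup (X ≃ᵢ X)} {B : ℝ}
    (α : ↥(ABSet o B) → BoundedContinuousFunction (↥Gs × ↥Gs) ℝ)
    (τ : ↥(TSet o Gs B)) : ↥Gs × ↥Gs → ℝ :=
  fun z =>
    α ⟨((τ : C(X, ℝ) × C(X, ℝ) × C(X, ℝ)).1, (τ : C(X, ℝ) × C(X, ℝ) × C(X, ℝ)).2.1),
        τ.2.2.2.2.1⟩ z +
    α ⟨((τ : C(X, ℝ) × C(X, ℝ) × C(X, ℝ)).2.1, (τ : C(X, ℝ) × C(X, ℝ) × C(X, ℝ)).2.2),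
        τ.2.2.2.2.2.1⟩ z +
    α ⟨((τ : C(X, ℝ) × C(X, ℝ) × C(X, ℝ)).2.2, (τ : C(X, ℝ) × C(X, ℝ) × C(X, ℝ)).1),
        τ.2.2.2.2.2.2⟩ z

/-- The subset `𝒫_{≥3}(Λ)` of probability measures on the compactification which are
supported on `Λ` and not concentrated on at most two points. -/
def PThree (o : X) (Gs : Subgroup (X ≃ᵢ X)) [MeasurableSpace C(X, ℝ)] :
    Set (MeasureTheory.ProbabilityMeasure C(X, ℝ)) :=
  {ν | ν.toMeasure (limitSet o Gs)ᶜ = 0 ∧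
    ∀ a b : C(X, ℝ), ν.toMeasure {a, b} < 1}

/-! ## Hadamard-manifold notions for Corollary `rankrig` -/

/-- Geodesic completeness: every nontrivial geodesic segment extends to a biinfinite
geodesic line. -/
def GeodesicallyComplete (X : Type u) [MetricSpace X] : Prop :=
  ∀ (γ : ℝ → X) (a b : ℝ), a < b → GeodesicOn γ (Set.Icc a b) →
    ∃ γ' : ℝ → X, GeodesicOn γ' Set.univ ∧ ∀ t ∈ Set.Icc a b, γ' t = γ t

/-- `X` is a (globally) symmetric space: the geodesic symmetry at every point extends to
an isometry of `X`. -/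
def IsSymmetricSpace (X : Type u) [MetricSpace X] : Prop :=
  ∀ p : X, ∃ σ : X ≃ᵢ X, σ p = p ∧
    ∀ γ : ℝ → X, GeodesicOn γ Set.univ → γ 0 = p → ∀ t : ℝ, σ (γ t) = γ (-t)

/-- `X` is irreducible: it is not isometric to a non-trivial product (with the
Pythagorean/ℓ² product metric). -/
def IsIrreducibleMetricSpace (X : Type u) [MetricSpace X] : Prop :=
  ¬ ∃ (Y Z : Type u) (_ : MetricSpace Y) (_ : MetricSpace Z) (f : X ≃ Y × Z),
      (∃ y y' : Y, y ≠ y') ∧ (∃ z z' : Z, z ≠ z') ∧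
      ∀ a b : X, dist a b ^ 2 =
        dist (f a).1 (f b).1 ^ 2 + dist (f a).2 (f b).2 ^ 2

/-- An isometry is parabolic if its displacement function does not attain its infimum. -/
def IsParabolicIsom (g : X ≃ᵢ X) : Prop :=
  ¬ ∃ x : X, ∀ y : X, dist x (g x) ≤ dist y (g y)

section AuxTau
variable {Y : Type*} [MetricSpace Y]

private lemma sq_le_imp' {a b : ℝ} (ha : 0 ≤ a) (hb : 0 ≤ b) (h : a^2 ≤ b^2) : a ≤ b := by
  nlinarith

lemma midpoint_exists' [CAT0Space Y] (y z : Y) :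
    ∃ m : Y, dist y m = dist y z / 2 ∧ dist z m = dist y z / 2 := by
  obtain ⟨γ, h0, h1, h⟩ := CAT0Space.exists_geodesic y z
  have hd : (0:ℝ) ≤ dist y z := dist_nonneg
  refine ⟨γ (dist y z / 2), ?_, ?_⟩
  · have := h 0 ⟨le_refl 0, hd⟩ (dist y z / 2) ⟨by linarith, by linarith⟩
    rw [h0] at this; rw [this]; rw [abs_of_nonpos (by linarith)]; ring
  · have := h (dist y z) ⟨hd, le_refl _⟩ (dist y z / 2) ⟨by linarith, by linarith⟩
    rw [h1] at this; rw [this]; rw [abs_of_nonneg (by linarith)]; ring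

lemma midpt_contract' [CAT0Space Y] {y z z' m n : Y}
    (hm1 : dist y m = dist y z / 2) (hm2 : dist z m = dist y z / 2)
    (hn1 : dist y n = dist y z' / 2) (hn2 : dist z' n = dist y z' / 2) :
    dist m n ≤ dist z z' / 2 := by
  have h1 := CAT0Space.cn_ineq n y z m hm1 hm2
  have h2 := CAT0Space.cn_ineq z y z' n hn1 hn2
  have e1 : dist n y = dist y n := dist_comm n y
  have e2 : dist n m = dist m n := dist_comm n m
  have e3 : dist z n = dist n z := dist_comm z n
  have e4 : dist z y = dist y z := dist_comm z y
  rw [e1, hn1, e2] at h1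
  rw [e3, e4] at h2
  apply sq_le_imp' dist_nonneg (by positivity)
  have hb : (dist z z' / 2)^2 = dist z z' ^2 / 4 := by ring
  rw [hb]
  nlinarith [h1, h2]

lemma midpoint_convex_dist' [CAT0Space Y] {y z y' z' m m' : Y}
    (hm1 : dist y m = dist y z / 2) (hm2 : dist z m = dist y z / 2)
    (hm1' : dist y' m' = dist y' z' / 2) (hm2' : dist z' m' = dist y' z' / 2) :
    dist m m' ≤ (dist y y' + dist z z') / 2 := by
  obtain ⟨n, hn1, hn2⟩ := midpoint_exists' y z'
  have A : dist m n ≤ dist z z' / 2 := midpt_contract' hm1 hm2 hn1 hn2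
  have B1 : dist z' n = dist z' y / 2 := by rw [hn2, dist_comm y z']
  have B2 : dist y n = dist z' y / 2 := by rw [hn1, dist_comm y z']
  have C1 : dist z' m' = dist z' y' / 2 := by rw [hm2', dist_comm y' z']
  have C2 : dist y' m' = dist z' y' / 2 := by rw [hm1', dist_comm y' z']
  have B : dist n m' ≤ dist y y' / 2 := midpt_contract' B1 B2 C1 C2
  calc dist m m' ≤ dist m n + dist n m' := dist_triangle _ _ _
    _ ≤ dist z z' / 2 + dist y y' / 2 := add_le_add A B
    _ = (dist y y' + dist z z') / 2 := by ring

lemma geodesicOn_image_closed {γ : ℝ → Y} {J : Set ℝ} (hg : GeodesicOn γ J)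
    (hJ : IsClosed J) : IsClosed (γ '' J) := by
  apply IsSeqClosed.isClosed
  intro ys y hmem hy
  choose t ht hyt using hmem
  have hc : CauchySeq ys := hy.cauchySeq
  have hct : CauchySeq t := by
    rw [Metric.cauchySeq_iff] at hc ⊢
    intro ε hε
    obtain ⟨N, hN⟩ := hc ε hε
    refine ⟨N, fun m hm n hn => ?_⟩
    have := hN m hm n hn
    rw [Real.dist_eq, ← hg _ (ht m) _ (ht n)]
    rw [hyt m, hyt n]; exact this
  obtain ⟨s, hs⟩ := cauchySeq_tendsto_of_complete hct
  have hsJ : s ∈ J := hJ.mem_of_tendsto hs (Filter.Eventually.of_forall ht)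
  have h2 : Filter.Tendsto ys Filter.atTop (nhds (γ s)) := by
    rw [tendsto_iff_dist_tendsto_zero]
    have he : ∀ n, dist (ys n) (γ s) = |t n - s| := fun n => by
      rw [← hyt n]; exact hg _ (ht n) _ hsJ
    simp only [he]
    have : Filter.Tendsto (fun n => t n - s) Filter.atTop (nhds 0) := by
      simpa using hs.sub (tendsto_const_nhds (x := s))
    simpa using this.abs
  exact ⟨s, hsJ, (tendsto_nhds_unique hy h2).symm⟩

/-- Generic: the `sInf` of a sublevel set of a function `1`-Lipschitz on a closed `J`
belongs to the sublevel set. -/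
lemma csInf_mem_sublevel {J : Set ℝ} (hJc : IsClosed J) {f : ℝ → ℝ}
    (hf : ∀ s ∈ J, ∀ t ∈ J, f s ≤ f t + |s - t|) (c : ℝ)
    (hne : {t | t ∈ J ∧ f t ≤ c}.Nonempty) (hbd : BddBelow {t | t ∈ J ∧ f t ≤ c}) :
    sInf {t | t ∈ J ∧ f t ≤ c} ∈ {t | t ∈ J ∧ f t ≤ c} := by
  set S := {t | t ∈ J ∧ f t ≤ c} with hS
  have hSJ : S ⊆ J := fun t ht => ht.1
  have hcl : sInf S ∈ J := by
    have := csInf_mem_closure hne hbd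
    exact hJc.closure_eq ▸ (closure_mono hSJ this)
  refine ⟨hcl, ?_⟩
  have key : ∀ ε > (0:ℝ), f (sInf S) - ε ≤ c := by
    intro ε hε
    obtain ⟨s, hsS, hs⟩ := exists_lt_of_csInf_lt hne (lt_add_of_pos_right (sInf S) hε)
    have h1 : sInf S ≤ s := csInf_le hbd hsS
    have h2 := hf (sInf S) hcl s (hSJ hsS)
    have h3 : |sInf S - s| ≤ ε := by rw [abs_of_nonpos (by linarith)]; linarith
    linarith [hsS.2]
  linarith [le_of_forall_sub_le key]

lemma csSup_mem_sublevel {J : Set ℝ} (hJc : IsClosed J) {f : ℝ → ℝ}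
    (hf : ∀ s ∈ J, ∀ t ∈ J, f s ≤ f t + |s - t|) (c : ℝ)
    (hne : {t | t ∈ J ∧ f t ≤ c}.Nonempty) (hbd : BddAbove {t | t ∈ J ∧ f t ≤ c}) :
    sSup {t | t ∈ J ∧ f t ≤ c} ∈ {t | t ∈ J ∧ f t ≤ c} := by
  set S := {t | t ∈ J ∧ f t ≤ c} with hS
  have hSJ : S ⊆ J := fun t ht => ht.1
  have hcl : sSup S ∈ J := by
    have := csSup_mem_closure hne hbd
    exact hJc.closure_eq ▸ (closure_mono hSJ this)
  refine ⟨hcl, ?_⟩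
  have key : ∀ ε > (0:ℝ), f (sSup S) - ε ≤ c := by
    intro ε hε
    obtain ⟨s, hsS, hs⟩ := exists_lt_of_lt_csSup hne (sub_lt_self (sSup S) hε)
    have h1 : s ≤ sSup S := le_csSup hbd hsS
    have h2 := hf (sSup S) hcl s (hSJ hsS)
    have h3 : |sSup S - s| ≤ ε := by rw [abs_of_nonneg (by linarith)]; linarith
    linarith [hsS.2]
  linarith [le_of_forall_sub_le key]

/-- Interval argument: a point between two points of a closed sublevel set of a
`1`-Lipschitz midpoint-convex function lies in the sublevel set. -/
lemma mem_sublevel_of_between {J : Set ℝ} (hJo : Set.OrdConnected J) {f : ℝ → ℝ}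
    (hf : ∀ s ∈ J, ∀ t ∈ J, f s ≤ f t + |s - t|)
    (hmid : ∀ u ∈ J, ∀ v ∈ J, u ≤ v → f ((u + v) / 2) ≤ (f u + f v) / 2)
    {c a b p : ℝ} (ha : a ∈ J) (hfa : f a ≤ c) (hb : b ∈ J) (hfb : f b ≤ c)
    (hap : a ≤ p) (hpb : p ≤ b) : p ∈ J ∧ f p ≤ c := by
  have hab : a ≤ b := le_trans hap hpb
  have hpJ : p ∈ J := hJo.out ha hb ⟨hap, hpb⟩
  refine ⟨hpJ, ?_⟩
  set T := {s | s ∈ J ∧ f s ≤ c ∧ a ≤ s ∧ s ≤ p} with hT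
  set V := {s | s ∈ J ∧ f s ≤ c ∧ p ≤ s ∧ s ≤ b} with hV
  have hTne : T.Nonempty := ⟨a, ha, hfa, le_refl a, hap⟩
  have hVne : V.Nonempty := ⟨b, hb, hfb, hpb, le_refl b⟩
  have hTbd : BddAbove T := ⟨p, fun s hs => hs.2.2.2⟩
  have hVbd : BddBelow V := ⟨p, fun s hs => hs.2.2.1⟩
  set u := sSup T with hu
  set v := sInf V with hv
  have hau : a ≤ u := le_csSup hTbd ⟨ha, hfa, le_refl a, hap⟩
  have hup : u ≤ p := csSup_le hTne fun s hs => hs.2.2.2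
  have hpv : p ≤ v := le_csInf hVne fun s hs => hs.2.2.1
  have hvb : v ≤ b := csInf_le hVbd ⟨hb, hfb, hpb, le_refl b⟩
  have huJ : u ∈ J := hJo.out ha hb ⟨hau, le_trans hup hpb⟩
  have hvJ : v ∈ J := hJo.out ha hb ⟨le_trans hap hpv, hvb⟩
  have hfu : f u ≤ c := by
    have key : ∀ ε > (0:ℝ), f u - ε ≤ c := by
      intro ε hε
      obtain ⟨s, hsS, hs⟩ := exists_lt_of_lt_csSup hTne (sub_lt_self u hε)
      have h1 : s ≤ u := le_csSup hTbd hsS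
      have h2 := hf u huJ s hsS.1
      have h3 : |u - s| ≤ ε := by rw [abs_of_nonneg (by linarith)]; linarith
      linarith [hsS.2.1]
    linarith [le_of_forall_sub_le key]
  have hfv : f v ≤ c := by
    have key : ∀ ε > (0:ℝ), f v - ε ≤ c := by
      intro ε hε
      obtain ⟨s, hsS, hs⟩ := exists_lt_of_csInf_lt hVne (lt_add_of_pos_right v hε)
      have h1 : v ≤ s := csInf_le hVbd hsS
      have h2 := hf v hvJ s hsS.1
      have h3 : |v - s| ≤ ε := by rw [abs_of_nonpos (by linarith)]; linarith
      linarith [hsS.2.1]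
    linarith [le_of_forall_sub_le key]
  rcases eq_or_lt_of_le hup with hup' | hup'
  · rwa [hup'] at hfu
  rcases eq_or_lt_of_le hpv with hpv' | hpv'
  · rwa [← hpv'] at hfv
  exfalso
  set w := (u + v) / 2 with hw
  have huv : u < v := lt_trans hup' hpv'
  have hw1 : u < w := by rw [hw]; linarith
  have hw2 : w < v := by rw [hw]; linarith
  have hfw : f w ≤ c := by
    have := hmid u huJ v hvJ (le_of_lt huv)
    rw [← hw] at this; linarith
  have hwJ : w ∈ J := hJo.out huJ hvJ ⟨le_of_lt hw1, le_of_lt hw2⟩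
  rcases le_or_gt w p with hwp | hwp
  · have : w ≤ u := le_csSup hTbd ⟨hwJ, hfw, le_trans hau (le_of_lt hw1), hwp⟩
    linarith
  · have : v ≤ w := csInf_le hVbd ⟨hwJ, hfw, le_of_lt hwp, le_trans (le_of_lt hw2) hvb⟩
    linarith



lemma projParam_spec {Y : Type*} [MetricSpace Y] [ProperSpace Y] {γ : ℝ → Y} {J : Set ℝ}
    (hg : GeodesicOn γ J) (hJc : IsClosed J) (hne : J.Nonempty) (x : Y) :
    projParam γ J x ∈ J ∧ dist x (γ (projParam γ J x)) = Metric.infDist x (γ '' J) := by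
  have hZc : IsClosed (γ '' J) := geodesicOn_image_closed hg hJc
  have hZne : (γ '' J).Nonempty := hne.image γ
  obtain ⟨y, hyZ, hyd⟩ := hZc.exists_infDist_eq_dist hZne x
  obtain ⟨t₀, ht₀J, ht₀⟩ := hyZ
  set I := Metric.infDist x (γ '' J) with hI
  have hI0 : 0 ≤ I := Metric.infDist_nonneg
  have hMeq : {t | t ∈ J ∧ dist x (γ t) = I} = {t | t ∈ J ∧ dist x (γ t) ≤ I} := by
    ext t
    refine ⟨fun h => ⟨h.1, le_of_eq h.2⟩, fun h => ⟨h.1, le_antisymm h.2 ?_⟩⟩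
    exact Metric.infDist_le_dist_of_mem ⟨t, h.1, rfl⟩
  have hlip : ∀ s ∈ J, ∀ t ∈ J, dist x (γ s) ≤ dist x (γ t) + |s - t| := by
    intro s hs t ht
    calc dist x (γ s) ≤ dist x (γ t) + dist (γ t) (γ s) := dist_triangle _ _ _
      _ = dist x (γ t) + |t - s| := by rw [hg _ ht _ hs]
      _ = dist x (γ t) + |s - t| := by rw [abs_sub_comm]
  have hMne : {t | t ∈ J ∧ dist x (γ t) ≤ I}.Nonempty :=
    ⟨t₀, ht₀J, by rw [ht₀, ← hyd]⟩
  have hMbd : BddBelow {t | t ∈ J ∧ dist x (γ t) ≤ I} := by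
    refine ⟨t₀ - 2 * I, fun t ht => ?_⟩
    have h1 : dist (γ t) (γ t₀) = |t - t₀| := hg _ ht.1 _ ht₀J
    have h2 : dist (γ t) (γ t₀) ≤ dist (γ t) x + dist x (γ t₀) := dist_triangle _ _ _
    have h3 : dist x (γ t₀) = I := by rw [ht₀, ← hyd]
    have h4 : dist (γ t) x = dist x (γ t) := dist_comm _ _
    have h5 : |t - t₀| ≤ 2 * I := by rw [← h1]; rw [h4] at h2; linarith [ht.2]
    have := abs_le.mp h5
    linarith [this.1]
  have key := csInf_mem_sublevel hJc hlip I hMne hMbd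
  have hpp : projParam γ J x = sInf {t | t ∈ J ∧ dist x (γ t) ≤ I} := by
    rw [projParam, hMeq]
  rw [hpp]
  refine ⟨key.1, le_antisymm key.2 ?_⟩
  exact Metric.infDist_le_dist_of_mem ⟨_, key.1, rfl⟩

/-- Key contraction estimate. -/
lemma key_contract {Y : Type*} [MetricSpace Y] [ProperSpace Y] [CAT0Space Y]
    {B : ℝ} (hB : 0 < B) {Z : Set Y} (hZc : IsClosed Z) (hZne : Z.Nonempty)
    (hcontr : ∀ (z : Y) (r : ℝ), Disjoint (Metric.closedBall z r) Z →
      EMetric.diam (⋃ w ∈ Metric.closedBall z r, projSet Z w) ≤ ENNReal.ofReal B)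
    {x m p : Y} (hm : Metric.infDist m Z ≤ 6 * B + 2)
    (hxm : dist x m ≤ Metric.infDist x Z) (hpZ : p ∈ Z)
    (hpd : dist x p = Metric.infDist x Z) :
    dist m p ≤ 24 * B + 8 := by
  set D := Metric.infDist x Z with hD
  by_cases hDle : D ≤ 6 * B + 3
  · calc dist m p ≤ dist m x + dist x p := dist_triangle _ _ _
      _ = dist x m + D := by rw [dist_comm m x, hpd]
      _ ≤ 24 * B + 8 := by linarith
  · push_neg at hDle
    obtain ⟨z, hzZ, hz⟩ := hZc.exists_infDist_eq_dist hZne m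
    have hmz : dist m z ≤ 6 * B + 2 := by rw [← hz]; exact hm
    have hxz : dist x z ≤ dist x m + (6 * B + 2) := by
      calc dist x z ≤ dist x m + dist m z := dist_triangle _ _ _
        _ ≤ dist x m + (6 * B + 2) := by linarith
    have hDxz : D ≤ dist x z := Metric.infDist_le_dist_of_mem hzZ
    obtain ⟨γ, hγ0, hγ1, hγ⟩ := CAT0Space.exists_geodesic x z
    set r := D - 1 with hr
    have hr0 : (0:ℝ) ≤ r := by linarith
    have hrd : r ≤ dist x z := by linarith
    set y := γ r with hy
    have hxy : dist x y = r := by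
      have := hγ 0 ⟨le_refl 0, dist_nonneg⟩ r ⟨hr0, hrd⟩
      rw [hγ0] at this; rw [hy, this, abs_of_nonpos (by linarith)]; ring
    have hyz : dist y z = dist x z - r := by
      have := hγ r ⟨hr0, hrd⟩ (dist x z) ⟨dist_nonneg, le_refl _⟩
      rw [hγ1] at this; rw [hy, this, abs_of_nonpos (by linarith)]; ring
    have hyzle : dist y z ≤ 6 * B + 3 := by rw [hyz]; linarith
    obtain ⟨q, hqZ, hq⟩ := hZc.exists_infDist_eq_dist hZne y
    have hyq : dist y q ≤ 6 * B + 3 := by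
      rw [← hq]; exact le_trans (Metric.infDist_le_dist_of_mem hzZ) hyzle
    have hdisj : Disjoint (Metric.closedBall x r) Z := by
      rw [Set.disjoint_left]
      intro w hw hwZ
      have h1 : D ≤ dist x w := Metric.infDist_le_dist_of_mem hwZ
      rw [Metric.mem_closedBall, dist_comm w x] at hw
      linarith
    have hdiam := hcontr x r hdisj
    have hpmem : p ∈ ⋃ w ∈ Metric.closedBall x r, projSet Z w := by
      refine Set.mem_biUnion (Metric.mem_closedBall_self hr0) ⟨hpZ, hpd⟩
    have hqmem : q ∈ ⋃ w ∈ Metric.closedBall x r, projSet Z w := by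
      refine Set.mem_biUnion ?_ ⟨hqZ, hq.symm⟩
      rw [Metric.mem_closedBall, dist_comm y x, hxy]
    have hpq : dist p q ≤ B := by
      have h1 := le_trans (EMetric.edist_le_diam_of_mem hpmem hqmem) hdiam
      rw [edist_dist] at h1
      exact (ENNReal.ofReal_le_ofReal_iff hB.le).mp h1
    calc dist m p ≤ dist m z + dist z y + dist y p := dist_triangle4 _ _ _ _
      _ ≤ dist m z + dist z y + (dist y q + dist q p) := by
          linarith [dist_triangle y q p]
      _ ≤ (6 * B + 2) + (6 * B + 3) + ((6 * B + 3) + B) := by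
          rw [dist_comm z y, dist_comm q p]
          linarith
      _ ≤ 24 * B + 8 := by linarith

end AuxTau

/-- Lemma `tauproj`. If `ζ₁, ζ₂` are `B`-contracting geodesics in a proper
CAT(0)-space and `τ_B(x, ζ₁, ζ₂) > 0`, then the projections of `x` to the two geodesics are
at distance at most `24B + 8`. -/
theorem tauB_pos_projections_close
    {X : Type} [MetricSpace X] [ProperSpace X] [CAT0Space X] (o : X)
    (B : ℝ) (hB : 0 < B) (ζ₁ ζ₂ : ℝ → X) (J₁ J₂ : Set ℝ)
    (h1 : ContractingOn B ζ₁ J₁) (h2 : ContractingOn B ζ₂ J₂)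
    (hJ₁c : IsClosed J₁) (hJ₁o : J₁.OrdConnected)
    (hJ₂c : IsClosed J₂) (hJ₂o : J₂.OrdConnected)
    (hshare : ShareAtMostOneEnd o ζ₁ ζ₂)
    (x : X) (hpos : 0 < tauB B x ζ₁ J₁ ζ₂ J₂) :
    dist (ζ₁ (projParam ζ₁ J₁ x)) (ζ₂ (projParam ζ₂ J₂ x)) ≤ 24 * B + 8 := by
  classical
  simp only [tauB] at hpos
  rcases em ((nearSet B ζ₁ J₁ ζ₂ J₂).Nonempty ∧
      (nearSet B ζ₂ J₂ ζ₁ J₁).Nonempty ∧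
      (if BddBelow (nearSet B ζ₂ J₂ ζ₁ J₁) then
          ((projParam ζ₁ J₁ (ζ₂ (sInf (nearSet B ζ₂ J₂ ζ₁ J₁))) : ℝ) : EReal) else ⊥) <
        (if BddAbove (nearSet B ζ₂ J₂ ζ₁ J₁) then
          ((projParam ζ₁ J₁ (ζ₂ (sSup (nearSet B ζ₂ J₂ ζ₁ J₁))) : ℝ) : EReal) else ⊤) ∧
      (if BddBelow (nearSet B ζ₁ J₁ ζ₂ J₂) then
          ((projParam ζ₂ J₂ (ζ₁ (sInf (nearSet B ζ₁ J₁ ζ₂ J₂))) : ℝ) : EReal) else ⊥) <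
        (if BddAbove (nearSet B ζ₁ J₁ ζ₂ J₂) then
          ((projParam ζ₂ J₂ (ζ₁ (sSup (nearSet B ζ₁ J₁ ζ₂ J₂))) : ℝ) : EReal) else ⊤) ∧
      (if BddBelow (nearSet B ζ₁ J₁ ζ₂ J₂) then
          ((sInf (nearSet B ζ₁ J₁ ζ₂ J₂) : ℝ) : EReal) else ⊥) ≤
        ((projParam ζ₁ J₁ x : ℝ) : EReal) ∧
      ((projParam ζ₁ J₁ x : ℝ) : EReal) ≤
        (if BddAbove (nearSet B ζ₁ J₁ ζ₂ J₂) then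
          ((sSup (nearSet B ζ₁ J₁ ζ₂ J₂) : ℝ) : EReal) else ⊤) ∧
      (if BddBelow (nearSet B ζ₂ J₂ ζ₁ J₁) then
          ((sInf (nearSet B ζ₂ J₂ ζ₁ J₁) : ℝ) : EReal) else ⊥) ≤
        ((projParam ζ₂ J₂ x : ℝ) : EReal) ∧
      ((projParam ζ₂ J₂ x : ℝ) : EReal) ≤
        (if BddAbove (nearSet B ζ₂ J₂ ζ₁ J₁) then
          ((sSup (nearSet B ζ₂ J₂ ζ₁ J₁) : ℝ) : EReal) else ⊤)) with hcond | hcond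
  swap
  · rw [if_neg hcond] at hpos
    exact absurd hpos (lt_irrefl 0)
  obtain ⟨hN₁ne, hN₂ne, -, -, h5, h6, h7, h8⟩ := hcond
  have hg₁ := h1.1
  have hg₂ := h2.1
  have hJ₁ne : J₁.Nonempty := by obtain ⟨t, ht⟩ := hN₁ne; exact ⟨t, ht.1⟩
  have hJ₂ne : J₂.Nonempty := by obtain ⟨t, ht⟩ := hN₂ne; exact ⟨t, ht.1⟩
  have hZ₁c : IsClosed (ζ₁ '' J₁) := geodesicOn_image_closed hg₁ hJ₁c
  have hZ₂c : IsClosed (ζ₂ '' J₂) := geodesicOn_image_closed hg₂ hJ₂c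
  have hZ₁ne : (ζ₁ '' J₁).Nonempty := hJ₁ne.image _
  have hZ₂ne : (ζ₂ '' J₂).Nonempty := hJ₂ne.image _
  have hp₁ := projParam_spec hg₁ hJ₁c hJ₁ne x
  have hp₂ := projParam_spec hg₂ hJ₂c hJ₂ne x
  set p₁ := projParam ζ₁ J₁ x with hp₁def
  set p₂ := projParam ζ₂ J₂ x with hp₂def
  -- Lipschitz and midpoint-convexity data, symmetric in the two geodesics
  have hlip : ∀ (ζ : ℝ → X) (J : Set ℝ), GeodesicOn ζ J → ∀ (Z : Set X),
      ∀ s ∈ J, ∀ t ∈ J, Metric.infDist (ζ s) Z ≤ Metric.infDist (ζ t) Z + |s - t| := by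
    intro ζ J hg Z s hs t ht
    calc Metric.infDist (ζ s) Z ≤ Metric.infDist (ζ t) Z + dist (ζ s) (ζ t) :=
          Metric.infDist_le_infDist_add_dist
      _ = Metric.infDist (ζ t) Z + |s - t| := by rw [hg _ hs _ ht]
  have hmid : ∀ (ζ : ℝ → X) (J : Set ℝ), GeodesicOn ζ J → J.OrdConnected →
      ∀ (ζ' : ℝ → X) (J' : Set ℝ), GeodesicOn ζ' J' → J'.OrdConnected →
      IsClosed (ζ' '' J') → (ζ' '' J').Nonempty →
      ∀ u ∈ J, ∀ v ∈ J, u ≤ v →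
        Metric.infDist (ζ ((u + v) / 2)) (ζ' '' J') ≤
          (Metric.infDist (ζ u) (ζ' '' J') + Metric.infDist (ζ v) (ζ' '' J')) / 2 := by
    intro ζ J hg hJo ζ' J' hg' hJ'o hZc hZne u hu v hv huv
    have hmidJ : (u + v) / 2 ∈ J := hJo.out hu hv ⟨by linarith, by linarith⟩
    have hA : dist (ζ u) (ζ ((u + v) / 2)) = dist (ζ u) (ζ v) / 2 := by
      rw [hg _ hu _ hmidJ, hg _ hu _ hv, abs_of_nonpos (by linarith),
        abs_of_nonpos (by linarith)]
      ring
    have hB' : dist (ζ v) (ζ ((u + v) / 2)) = dist (ζ u) (ζ v) / 2 := by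
      rw [hg _ hv _ hmidJ, hg _ hu _ hv, abs_of_nonneg (by linarith),
        abs_of_nonpos (by linarith)]
      ring
    obtain ⟨wu, hwuZ, hwu⟩ := hZc.exists_infDist_eq_dist hZne (ζ u)
    obtain ⟨wv, hwvZ, hwv⟩ := hZc.exists_infDist_eq_dist hZne (ζ v)
    obtain ⟨su, hsuJ, hsueq⟩ := hwuZ
    obtain ⟨sv, hsvJ, hsveq⟩ := hwvZ
    have hmidJ' : (su + sv) / 2 ∈ J' := by
      rcases le_total su sv with hc | hc
      · exact hJ'o.out hsuJ hsvJ ⟨by linarith, by linarith⟩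
      · exact hJ'o.out hsvJ hsuJ ⟨by linarith, by linarith⟩
    have hA' : dist wu (ζ' ((su + sv) / 2)) = dist wu wv / 2 := by
      rw [← hsueq, ← hsveq, hg' _ hsuJ _ hmidJ', hg' _ hsuJ _ hsvJ]
      rw [show su - (su + sv) / 2 = (su - sv) / 2 by ring, abs_div]
      simp
    have hB'' : dist wv (ζ' ((su + sv) / 2)) = dist wu wv / 2 := by
      rw [← hsueq, ← hsveq, hg' _ hsvJ _ hmidJ', hg' _ hsuJ _ hsvJ]
      rw [show sv - (su + sv) / 2 = -((su - sv) / 2) by ring, abs_neg, abs_div]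
      simp
    have hkey := midpoint_convex_dist' hA hB' hA' hB''
    calc Metric.infDist (ζ ((u + v) / 2)) (ζ' '' J')
        ≤ dist (ζ ((u + v) / 2)) (ζ' ((su + sv) / 2)) :=
          Metric.infDist_le_dist_of_mem ⟨_, hmidJ', rfl⟩
      _ ≤ (dist (ζ u) wu + dist (ζ v) wv) / 2 := hkey
      _ = (Metric.infDist (ζ u) (ζ' '' J') + Metric.infDist (ζ v) (ζ' '' J')) / 2 := by
          rw [hwu, hwv]
  -- p₁ lies in the near set N₁
  have hmem : ∀ (ζ : ℝ → X) (J : Set ℝ) (hg : GeodesicOn ζ J) (hJc : IsClosed J)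
      (hJo : J.OrdConnected) (ζ' : ℝ → X) (J' : Set ℝ) (hg' : GeodesicOn ζ' J')
      (hJ'o : J'.OrdConnected) (hZc : IsClosed (ζ' '' J')) (hZne : (ζ' '' J').Nonempty)
      (p : ℝ) (hpJ : p ∈ J)
      (ha : ∃ a ∈ nearSet B ζ J ζ' J', a ≤ p) (hb : ∃ b ∈ nearSet B ζ J ζ' J', p ≤ b),
      Metric.infDist (ζ p) (ζ' '' J') ≤ 6 * B + 2 := by
    intro ζ J hg hJc hJo ζ' J' hg' hJ'o hZc hZne p hpJ ha hb
    obtain ⟨a, haN, hap⟩ := ha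
    obtain ⟨b, hbN, hpb⟩ := hb
    exact (mem_sublevel_of_between hJo (hlip ζ J hg (ζ' '' J'))
      (hmid ζ J hg hJo ζ' J' hg' hJ'o hZc hZne) haN.1 haN.2 hbN.1 hbN.2 hap hpb).2
  have hN₁mem : Metric.infDist (ζ₁ p₁) (ζ₂ '' J₂) ≤ 6 * B + 2 := by
    refine hmem ζ₁ J₁ hg₁ hJ₁c hJ₁o ζ₂ J₂ hg₂ hJ₂o hZ₂c hZ₂ne p₁ hp₁.1 ?_ ?_
    · by_cases hbl : BddBelow (nearSet B ζ₁ J₁ ζ₂ J₂)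
      · rw [if_pos hbl] at h5
        exact ⟨sInf (nearSet B ζ₁ J₁ ζ₂ J₂),
          csInf_mem_sublevel hJ₁c (hlip ζ₁ J₁ hg₁ (ζ₂ '' J₂)) (6 * B + 2) hN₁ne hbl,
          EReal.coe_le_coe_iff.mp h5⟩
      · obtain ⟨a, haN, hap⟩ := not_bddBelow_iff.mp hbl p₁
        exact ⟨a, haN, hap.le⟩
    · by_cases hbu : BddAbove (nearSet B ζ₁ J₁ ζ₂ J₂)
      · rw [if_pos hbu] at h6
        exact ⟨sSup (nearSet B ζ₁ J₁ ζ₂ J₂),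
          csSup_mem_sublevel hJ₁c (hlip ζ₁ J₁ hg₁ (ζ₂ '' J₂)) (6 * B + 2) hN₁ne hbu,
          EReal.coe_le_coe_iff.mp h6⟩
      · obtain ⟨a, haN, hap⟩ := not_bddAbove_iff.mp hbu p₁
        exact ⟨a, haN, hap.le⟩
  have hN₂mem : Metric.infDist (ζ₂ p₂) (ζ₁ '' J₁) ≤ 6 * B + 2 := by
    refine hmem ζ₂ J₂ hg₂ hJ₂c hJ₂o ζ₁ J₁ hg₁ hJ₁o hZ₁c hZ₁ne p₂ hp₂.1 ?_ ?_
    · by_cases hbl : BddBelow (nearSet B ζ₂ J₂ ζ₁ J₁)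
      · rw [if_pos hbl] at h7
        exact ⟨sInf (nearSet B ζ₂ J₂ ζ₁ J₁),
          csInf_mem_sublevel hJ₂c (hlip ζ₂ J₂ hg₂ (ζ₁ '' J₁)) (6 * B + 2) hN₂ne hbl,
          EReal.coe_le_coe_iff.mp h7⟩
      · obtain ⟨a, haN, hap⟩ := not_bddBelow_iff.mp hbl p₂
        exact ⟨a, haN, hap.le⟩
    · by_cases hbu : BddAbove (nearSet B ζ₂ J₂ ζ₁ J₁)
      · rw [if_pos hbu] at h8
        exact ⟨sSup (nearSet B ζ₂ J₂ ζ₁ J₁),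
          csSup_mem_sublevel hJ₂c (hlip ζ₂ J₂ hg₂ (ζ₁ '' J₁)) (6 * B + 2) hN₂ne hbu,
          EReal.coe_le_coe_iff.mp h8⟩
      · obtain ⟨a, haN, hap⟩ := not_bddAbove_iff.mp hbu p₂
        exact ⟨a, haN, hap.le⟩
  rcases le_total (Metric.infDist x (ζ₁ '' J₁)) (Metric.infDist x (ζ₂ '' J₂)) with hcase | hcase
  · exact key_contract hB hZ₂c hZ₂ne h2.2 hN₁mem (hp₁.2 ▸ hcase) ⟨p₂, hp₂.1, rfl⟩ hp₂.2
  · rw [dist_comm]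
    exact key_contract hB hZ₁c hZ₁ne h1.2 hN₂mem (hp₂.2 ▸ hcase) ⟨p₁, hp₁.1, rfl⟩ hp₁.2

end
end

section
/- Let ζ_i: [0, ∞) → X (i = 1, 2) be two geodesic rays in a proper CAT(0)-space X with the same endpoint ζ₁(∞) = ζ₂(∞) in ∂X. Let s ∈ [1, ∞) be such that p = τ_B(ζ₁(s), ζ₁, ζ₂) ≥ 1. Then τ_B(ζ₁(s+t), ζ₁, ζ₂) ≥ p + t − 12B − 4 for all t ≥ 0. -/
open Metric Set Filter Topology
open scoped ENNReal Classical Pointwise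

noncomputable section

universe u

variable {X : Type u} [MetricSpace X]

namespace TauBAux

open Filter

variable {Y : Type u} [MetricSpace Y]

/-- Pointwise evaluation of the horofunction limit. -/
lemma endsAt_eval {o : Y} {γ : ℝ → Y} {η : C(Y, ℝ)} (h : EndsAt o γ η) (z : Y) :
    Tendsto (fun t => dist (γ t) z - dist (γ t) o) atTop (𝓝 (η z)) := by
  have h2 := ((continuous_eval_const z).tendsto η).comp h
  exact h2

/-- Horofunctions are 1-Lipschitz. -/
lemma endsAt_lip {o : Y} {γ : ℝ → Y} {η : C(Y, ℝ)} (h : EndsAt o γ η) (z w : Y) :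
    η z - η w ≤ dist z w := by
  have h3 := (endsAt_eval h z).sub (endsAt_eval h w)
  refine le_of_tendsto h3 (Eventually.of_forall fun t => ?_)
  have h4 := dist_triangle (γ t) w z
  have h5 := dist_comm w z
  linarith

/-- Key identity: `d(x, ζ u) - u → η x - η (ζ 0)` along the ray. -/
lemma dist_sub_tendsto {o : Y} {ζ : ℝ → Y} {η : C(Y, ℝ)} (h : EndsAt o ζ η)
    (hg : GeodesicOn ζ (Set.Ici 0)) (x : Y) :
    Tendsto (fun u => dist x (ζ u) - u) atTop (𝓝 (η x - η (ζ 0))) := by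
  have h3 := (endsAt_eval h x).sub (endsAt_eval h (ζ 0))
  refine h3.congr' ?_
  filter_upwards [eventually_ge_atTop (0 : ℝ)] with u hu
  have h4 : dist (ζ u) (ζ 0) = u := by
    rw [hg u hu 0 Set.self_mem_Ici, sub_zero, abs_of_nonneg hu]
  rw [dist_comm x (ζ u)]
  linarith

/-- Busemann decays at unit rate along its own ray. -/
lemma endsAt_self_eval {o : Y} {ζ : ℝ → Y} {η : C(Y, ℝ)} (h : EndsAt o ζ η)
    (hg : GeodesicOn ζ (Set.Ici 0)) {u : ℝ} (hu : 0 ≤ u) :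
    η (ζ u) = η (ζ 0) - u := by
  have h1 := dist_sub_tendsto h hg (ζ u)
  have h2 : Tendsto (fun v : ℝ => dist (ζ u) (ζ v) - v) atTop (𝓝 (-u)) := by
    refine tendsto_const_nhds.congr' ?_
    filter_upwards [eventually_ge_atTop u] with v hv
    rw [hg u hu v (le_trans hu hv), abs_of_nonpos (by linarith)]
    ring
  have := tendsto_nhds_unique h1 h2
  linarith

/-- `u ↦ d(x, ζ u) - u` is antitone. -/
lemma dist_sub_antitone {ζ : ℝ → Y} (hg : GeodesicOn ζ (Set.Ici 0)) (x : Y)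
    {u v : ℝ} (hu : 0 ≤ u) (huv : u ≤ v) :
    dist x (ζ v) - v ≤ dist x (ζ u) - u := by
  have h1 := dist_triangle x (ζ u) (ζ v)
  have h2 : dist (ζ u) (ζ v) = v - u := by
    rw [hg u hu v (le_trans hu huv), abs_of_nonpos (by linarith)]
    ring
  linarith

/-- The limit is bounded: `|L| ≤ d(x, ζ 0)`. -/
lemma limit_abs_le {ζ : ℝ → Y} (hg : GeodesicOn ζ (Set.Ici 0)) (x : Y) {L : ℝ}
    (hlim : Tendsto (fun u => dist x (ζ u) - u) atTop (𝓝 L)) :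
    |L| ≤ dist x (ζ 0) := by
  rw [abs_le]
  constructor
  · refine ge_of_tendsto hlim ?_
    filter_upwards [eventually_ge_atTop (0 : ℝ)] with u hu
    have h1 := dist_triangle (ζ 0) x (ζ u)
    have h2 : dist (ζ 0) (ζ u) = u := by
      rw [hg 0 Set.self_mem_Ici u hu, abs_of_nonpos (by linarith)]; ring
    have h3 := dist_comm (ζ 0) x
    linarith
  · refine le_of_tendsto hlim ?_
    filter_upwards [eventually_ge_atTop (0 : ℝ)] with u hu
    have := dist_sub_antitone hg x le_rfl hu
    simpa using this

/-- Also: `L ≤ d(x, ζ u) - u` for every `u ≥ 0`. -/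
lemma limit_le_dist_sub {ζ : ℝ → Y} (hg : GeodesicOn ζ (Set.Ici 0)) (x : Y) {L : ℝ}
    (hlim : Tendsto (fun u => dist x (ζ u) - u) atTop (𝓝 L)) {u : ℝ} (hu : 0 ≤ u) :
    L ≤ dist x (ζ u) - u := by
  refine le_of_tendsto hlim ?_
  filter_upwards [eventually_ge_atTop u] with v hv
  exact dist_sub_antitone hg x hu hv

section CAT0

variable [CAT0Space Y]

/-- CN inequality gives midpoint convexity of `u ↦ d(x, ζ u)² - (u - c)²`. -/
lemma cn_midpoint (x : Y) {ζ : ℝ → Y} (hg : GeodesicOn ζ (Set.Ici 0)) (c : ℝ)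
    {u₁ u₂ : ℝ} (h₁ : 0 ≤ u₁) (h₂ : 0 ≤ u₂) :
    dist x (ζ ((u₁ + u₂) / 2)) ^ 2 - ((u₁ + u₂) / 2 - c) ^ 2 ≤
      ((dist x (ζ u₁) ^ 2 - (u₁ - c) ^ 2) + (dist x (ζ u₂) ^ 2 - (u₂ - c) ^ 2)) / 2 := by
  have hm : (0 : ℝ) ≤ (u₁ + u₂) / 2 := by linarith
  have d12 : dist (ζ u₁) (ζ u₂) = |u₁ - u₂| := hg u₁ h₁ u₂ h₂
  have dm1 : dist (ζ u₁) (ζ ((u₁ + u₂) / 2)) = dist (ζ u₁) (ζ u₂) / 2 := by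
    rw [hg u₁ h₁ _ hm, d12]
    have h5 : u₁ - (u₁ + u₂) / 2 = (u₁ - u₂) / 2 := by ring
    rw [h5, abs_div]
    norm_num
  have dm2 : dist (ζ u₂) (ζ ((u₁ + u₂) / 2)) = dist (ζ u₁) (ζ u₂) / 2 := by
    rw [hg u₂ h₂ _ hm, d12]
    have h5 : u₂ - (u₁ + u₂) / 2 = (u₂ - u₁) / 2 := by ring
    rw [h5, abs_div, abs_sub_comm]
    norm_num
  have cn := CAT0Space.cn_ineq x (ζ u₁) (ζ u₂) (ζ ((u₁ + u₂) / 2)) dm1 dm2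
  rw [d12] at cn
  have habs : |u₁ - u₂| ^ 2 = (u₁ - u₂) ^ 2 := sq_abs _
  rw [habs] at cn
  nlinarith [cn]

/-- Midpoint convex continuous functions attain their max at endpoints. -/
lemma midpoint_convex_max {f : ℝ → ℝ} {a b : ℝ} (hab : a ≤ b)
    (hc : ContinuousOn f (Set.Icc a b))
    (hm : ∀ u v, a ≤ u → u ≤ b → a ≤ v → v ≤ b → f ((u + v) / 2) ≤ (f u + f v) / 2) :
    ∀ u, a ≤ u → u ≤ b → f u ≤ max (f a) (f b) := by
  obtain ⟨w, hw, hmax⟩ :=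
    (isCompact_Icc : IsCompact (Set.Icc a b)).exists_isMaxOn ⟨a, le_refl a, hab⟩ hc
  intro u hu1 hu2
  have hfu : f u ≤ f w := hmax ⟨hu1, hu2⟩
  rcases eq_or_lt_of_le (hw.1 : a ≤ w) with h1 | h1
  · exact hfu.trans (by rw [← h1]; exact le_max_left _ _)
  rcases eq_or_lt_of_le (hw.2 : w ≤ b) with h2 | h2
  · exact hfu.trans (by rw [h2]; exact le_max_right _ _)
  rcases le_total (w - a) (b - w) with hδ | hδ
  · have hx : a ≤ 2 * w - a := by linarith
    have hx2 : 2 * w - a ≤ b := by linarith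
    have hmid := hm a (2 * w - a) le_rfl hab hx hx2
    have h2w : f (2 * w - a) ≤ f w := hmax ⟨hx, hx2⟩
    have heq : (a + (2 * w - a)) / 2 = w := by ring
    rw [heq] at hmid
    have : f w ≤ f a := by linarith
    exact hfu.trans (this.trans (le_max_left _ _))
  · have hx : a ≤ 2 * w - b := by linarith
    have hx2 : 2 * w - b ≤ b := by linarith
    have hmid := hm (2 * w - b) b hx hx2 hab le_rfl
    have h2w : f (2 * w - b) ≤ f w := hmax ⟨hx, hx2⟩
    have heq : (2 * w - b + b) / 2 = w := by ring
    rw [heq] at hmid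
    have : f w ≤ f b := by linarith
    exact hfu.trans (this.trans (le_max_right _ _))

/-- The fundamental convexity bound. -/
lemma conv_bound {ζ : ℝ → Y} (hg : GeodesicOn ζ (Set.Ici 0)) (x : Y) {L : ℝ}
    (hlim : Tendsto (fun u => dist x (ζ u) - u) atTop (𝓝 L))
    {u : ℝ} (hu : 0 ≤ u) :
    dist x (ζ u) ^ 2 ≤ (u + L) ^ 2 + dist x (ζ 0) ^ 2 - L ^ 2 := by
  have hLabs : |L| ≤ dist x (ζ 0) := limit_abs_le hg x hlim
  have hL2 : L ^ 2 ≤ dist x (ζ 0) ^ 2 := by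
    have := sq_abs L
    nlinarith [abs_nonneg L, dist_nonneg (x := x) (y := ζ 0)]
  have hcont : ContinuousOn (fun v => dist x (ζ v)) (Set.Ici 0) := by
    refine (LipschitzOnWith.of_dist_le_mul (K := 1) fun s hs t ht => ?_).continuousOn
    calc dist (dist x (ζ s)) (dist x (ζ t)) = |dist (ζ s) x - dist (ζ t) x| := by
          rw [Real.dist_eq, dist_comm x (ζ s), dist_comm x (ζ t)]
      _ ≤ dist (ζ s) (ζ t) := abs_dist_sub_le _ _ _
      _ = (1 : NNReal) * dist s t := by rw [hg s hs t ht, Real.dist_eq]; simp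
  -- ε-approximation
  have key : ∀ ε > (0 : ℝ), dist x (ζ u) ^ 2 ≤
      (u + L + ε) ^ 2 + max (dist x (ζ 0) ^ 2 - (L + ε) ^ 2) 0 := by
    intro ε hε
    obtain ⟨U, hU⟩ := ((hlim.eventually_le_const (by linarith : L < L + ε)).and
      (eventually_ge_atTop (max u 0))).exists
    have hUu : u ≤ U := le_trans (le_max_left _ _) hU.2
    have hU0 : (0 : ℝ) ≤ U := le_trans (le_max_right _ _) hU.2
    have hUd : dist x (ζ U) ≤ U + L + ε := by have := hU.1; linarith
    set f : ℝ → ℝ := fun v => dist x (ζ v) ^ 2 - (v - (-(L + ε))) ^ 2 with hf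
    have hfc : ContinuousOn f (Set.Icc 0 U) := by
      apply ContinuousOn.sub
      · exact (hcont.mono (fun v hv => hv.1)).pow 2
      · exact (continuousOn_id.sub continuousOn_const).pow 2
    have hfm : ∀ v₁ v₂, 0 ≤ v₁ → v₁ ≤ U → 0 ≤ v₂ → v₂ ≤ U →
        f ((v₁ + v₂) / 2) ≤ (f v₁ + f v₂) / 2 := by
      intro v₁ v₂ h₁ _ h₂ _
      exact cn_midpoint x hg (-(L + ε)) h₁ h₂
    have hmax := midpoint_convex_max (f := f) hU0 hfc hfm u hu hUu
    have hfU : f U ≤ 0 := by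
      have hpos : (0 : ℝ) ≤ U + L + ε := le_trans dist_nonneg hUd
      have := sq_le_sq' (by nlinarith [dist_nonneg (x := x) (y := ζ U)] : -(U + L + ε) ≤ dist x (ζ U)) hUd
      simp only [hf]
      nlinarith [this]
    have hf0 : f 0 = dist x (ζ 0) ^ 2 - (L + ε) ^ 2 := by simp only [hf]; ring_nf
    have hfu2 : f u ≤ max (dist x (ζ 0) ^ 2 - (L + ε) ^ 2) 0 := by
      calc f u ≤ max (f 0) (f U) := hmax
        _ ≤ max (dist x (ζ 0) ^ 2 - (L + ε) ^ 2) 0 := by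
            apply max_le_max <;> [exact le_of_eq hf0; exact hfU]
    simp only [hf] at hfu2
    nlinarith [hfu2]
  -- pass to the limit ε → 0⁺
  have hlim2 : Tendsto (fun ε : ℝ => (u + L + ε) ^ 2 + max (dist x (ζ 0) ^ 2 - (L + ε) ^ 2) 0)
      (𝓝[>] (0 : ℝ)) (𝓝 ((u + L + 0) ^ 2 + max (dist x (ζ 0) ^ 2 - (L + 0) ^ 2) 0)) := by
    apply Filter.Tendsto.mono_left _ nhdsWithin_le_nhds
    exact Continuous.tendsto (by continuity) 0
  have hval : (u + L + 0) ^ 2 + max (dist x (ζ 0) ^ 2 - (L + 0) ^ 2) 0 =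
      (u + L) ^ 2 + dist x (ζ 0) ^ 2 - L ^ 2 := by
    rw [add_zero, add_zero, max_eq_left (by linarith)]
    ring
  rw [hval] at hlim2
  refine ge_of_tendsto hlim2 ?_
  filter_upwards [self_mem_nhdsWithin] with ε hε
  exact key ε hε

/-- The two-sided main bound for asymptotic rays. -/
lemma main_bound {o : Y} {ζ₁ ζ₂ : ℝ → Y} {η : C(Y, ℝ)}
    (hg1 : GeodesicOn ζ₁ (Set.Ici 0)) (hg2 : GeodesicOn ζ₂ (Set.Ici 0))
    (he1 : EndsAt o ζ₁ η) (he2 : EndsAt o ζ₂ η)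
    {r u : ℝ} (hr : 0 ≤ r) (hu : 0 ≤ u) :
    dist (ζ₁ r) (ζ₂ u) ^ 2 ≤ (u - r - (η (ζ₂ 0) - η (ζ₁ 0))) ^ 2
      + dist (ζ₁ 0) (ζ₂ 0) ^ 2 - (η (ζ₂ 0) - η (ζ₁ 0)) ^ 2 := by
  set K := η (ζ₂ 0) - η (ζ₁ 0) with hK
  have s1 : dist (ζ₂ 0) (ζ₁ r) ^ 2 ≤ (r + K) ^ 2 + dist (ζ₂ 0) (ζ₁ 0) ^ 2 - K ^ 2 := by
    have hlim := dist_sub_tendsto he1 hg1 (ζ₂ 0)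
    have := conv_bound hg1 (ζ₂ 0) hlim hr
    convert this using 3 <;> rw [hK] <;> ring
  have hlim2 : Tendsto (fun v => dist (ζ₁ r) (ζ₂ v) - v) atTop (𝓝 (-(r + K))) := by
    have h0 := dist_sub_tendsto he2 hg2 (ζ₁ r)
    rw [endsAt_self_eval he1 hg1 hr] at h0
    have : η (ζ₁ 0) - r - η (ζ₂ 0) = -(r + K) := by rw [hK]; ring
    rwa [this] at h0
  have s2 := conv_bound hg2 (ζ₁ r) hlim2 hu
  have e1 : (u + -(r + K)) ^ 2 = (u - r - K) ^ 2 := by ring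
  have e2 : (-(r + K)) ^ 2 = (r + K) ^ 2 := by ring
  rw [e1, e2, dist_comm (ζ₁ r) (ζ₂ 0)] at s2
  rw [dist_comm (ζ₂ 0) (ζ₁ 0)] at s1
  linarith

/-- Lipschitz lower bound. -/
lemma lower_bound {o : Y} {ζ₁ ζ₂ : ℝ → Y} {η : C(Y, ℝ)}
    (hg1 : GeodesicOn ζ₁ (Set.Ici 0)) (hg2 : GeodesicOn ζ₂ (Set.Ici 0))
    (he1 : EndsAt o ζ₁ η) (he2 : EndsAt o ζ₂ η)
    {r u : ℝ} (hr : 0 ≤ r) (hu : 0 ≤ u) :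
    |u - r - (η (ζ₂ 0) - η (ζ₁ 0))| ≤ dist (ζ₁ r) (ζ₂ u) := by
  have e1 : η (ζ₁ r) = η (ζ₁ 0) - r := endsAt_self_eval he1 hg1 hr
  have e2 : η (ζ₂ u) = η (ζ₂ 0) - u := endsAt_self_eval he2 hg2 hu
  have l1 := endsAt_lip he1 (ζ₁ r) (ζ₂ u)
  have l2 := endsAt_lip he1 (ζ₂ u) (ζ₁ r)
  rw [dist_comm (ζ₂ u) (ζ₁ r)] at l2
  rw [abs_le]
  constructor <;> [skip; rw [e1, e2] at l1] <;> [rw [e1, e2] at l2; skip] <;> linarith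

/-- Shifting a geodesic ray. -/
lemma geodesicOn_shift {ζ : ℝ → Y} (hg : GeodesicOn ζ (Set.Ici 0)) {a : ℝ} (ha : 0 ≤ a) :
    GeodesicOn (fun v => ζ (a + v)) (Set.Ici 0) := by
  intro s hs t ht
  have hs' : (0:ℝ) ≤ s := hs
  have ht' : (0:ℝ) ≤ t := ht
  have := hg (a + s) (by simp only [Set.mem_Ici]; linarith) (a + t)
    (by simp only [Set.mem_Ici]; linarith)
  simpa using this

lemma endsAt_shift {o : Y} {ζ : ℝ → Y} {η : C(Y, ℝ)} (he : EndsAt o ζ η) (a : ℝ) :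
    EndsAt o (fun v => ζ (a + v)) η :=
  he.comp (tendsto_atTop_add_const_left atTop a tendsto_id)

/-- The key asymptotic estimate: for `r ≥ a` the distance from `ζ₁ r` to the second ray
is bounded by `d(ζ₁ a, ζ₂ b)` for any `b ≥ 0`. -/
lemma infDist_le_of_asymp {o : Y} {ζ₁ ζ₂ : ℝ → Y} {η : C(Y, ℝ)}
    (hg1 : GeodesicOn ζ₁ (Set.Ici 0)) (hg2 : GeodesicOn ζ₂ (Set.Ici 0))
    (he1 : EndsAt o ζ₁ η) (he2 : EndsAt o ζ₂ η)
    {a b r : ℝ} (ha : 0 ≤ a) (hb : 0 ≤ b) (har : a ≤ r) :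
    Metric.infDist (ζ₁ r) (ζ₂ '' Set.Ici 0) ≤ dist (ζ₁ a) (ζ₂ b) := by
  have hg1' := geodesicOn_shift hg1 ha
  have hg2' := geodesicOn_shift hg2 hb
  have he1' := endsAt_shift he1 a
  have he2' := endsAt_shift he2 b
  have hC1 : η (ζ₂ b) - η (ζ₁ a) ≤ dist (ζ₁ a) (ζ₂ b) := by
    have := endsAt_lip he1 (ζ₂ b) (ζ₁ a)
    rw [dist_comm] at this; linarith
  have hC2 : -(dist (ζ₁ a) (ζ₂ b)) ≤ η (ζ₂ b) - η (ζ₁ a) := by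
    have := endsAt_lip he1 (ζ₁ a) (ζ₂ b); linarith
  have hv : 0 ≤ r - a := by linarith
  have key : ∀ w, 0 ≤ w → dist (ζ₁ r) (ζ₂ (b + w)) ^ 2 ≤
      (w - (r - a) - (η (ζ₂ b) - η (ζ₁ a))) ^ 2 + dist (ζ₁ a) (ζ₂ b) ^ 2
        - (η (ζ₂ b) - η (ζ₁ a)) ^ 2 := by
    intro w hw0
    have hmb := main_bound hg1' hg2' he1' he2' hv hw0
    simp only [add_zero] at hmb
    rw [show a + (r - a) = r by ring] at hmb
    exact hmb
  have hfin : ∃ y ∈ ζ₂ '' Set.Ici 0, dist (ζ₁ r) y ≤ dist (ζ₁ a) (ζ₂ b) := by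
    rcases le_or_gt 0 (r - a + (η (ζ₂ b) - η (ζ₁ a))) with hcase | hcase
    · refine ⟨ζ₂ (b + (r - a + (η (ζ₂ b) - η (ζ₁ a)))),
        ⟨b + (r - a + (η (ζ₂ b) - η (ζ₁ a))), by simp only [Set.mem_Ici]; linarith, rfl⟩, ?_⟩
      have h5 := key _ hcase
      have h6 : (r - a + (η (ζ₂ b) - η (ζ₁ a)) - (r - a) - (η (ζ₂ b) - η (ζ₁ a))) ^ 2 = 0 := by
        ring_nf
      rw [h6] at h5
      nlinarith [dist_nonneg (x := ζ₁ r) (y := ζ₂ (b + (r - a + (η (ζ₂ b) - η (ζ₁ a))))),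
        dist_nonneg (x := ζ₁ a) (y := ζ₂ b), sq_nonneg (η (ζ₂ b) - η (ζ₁ a))]
    · refine ⟨ζ₂ (b + 0), ⟨b + 0, by simp only [Set.mem_Ici]; linarith, rfl⟩, ?_⟩
      have h5 := key 0 le_rfl
      have h7 : (0 - (r - a) - (η (ζ₂ b) - η (ζ₁ a))) ^ 2 ≤ (η (ζ₂ b) - η (ζ₁ a)) ^ 2 := by
        have e3 : (0 - (r - a) - (η (ζ₂ b) - η (ζ₁ a))) ^ 2 - (η (ζ₂ b) - η (ζ₁ a)) ^ 2
            = (r - a) * ((r - a) + 2 * (η (ζ₂ b) - η (ζ₁ a))) := by ring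
        have e4 : (r - a) + 2 * (η (ζ₂ b) - η (ζ₁ a)) ≤ 0 := by linarith
        nlinarith [mul_nonpos_of_nonneg_of_nonpos hv e4]
      nlinarith [dist_nonneg (x := ζ₁ r) (y := ζ₂ (b + 0)),
        dist_nonneg (x := ζ₁ a) (y := ζ₂ b)]
  obtain ⟨y, hy, hyd⟩ := hfin
  exact (Metric.infDist_le_dist_of_mem hy).trans hyd

end CAT0

section Proper

variable [ProperSpace Y]

lemma image_closed {ζ : ℝ → Y} (hg : GeodesicOn ζ (Set.Ici 0)) :
    IsClosed (ζ '' Set.Ici 0) := by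
  haveI : CompleteSpace (Set.Ici (0:ℝ)) := (isClosed_Ici (a := (0:ℝ))).completeSpace_coe
  have hiso : Isometry (fun t : Set.Ici (0:ℝ) => ζ t) := by
    apply Isometry.of_dist_eq
    intro x y
    rw [hg x x.2 y y.2, Subtype.dist_eq, Real.dist_eq]
  have := hiso.isClosedEmbedding.isClosed_range
  rwa [Set.image_eq_range]

lemma projParam_spec {ζ : ℝ → Y} (hg : GeodesicOn ζ (Set.Ici 0)) (x : Y) :
    projParam ζ (Set.Ici 0) x ∈ Set.Ici (0:ℝ) ∧
      dist x (ζ (projParam ζ (Set.Ici 0) x)) = Metric.infDist x (ζ '' Set.Ici 0) := by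
  have hcont : ContinuousOn (fun t => dist x (ζ t)) (Set.Ici 0) := by
    refine (LipschitzOnWith.of_dist_le_mul (K := 1) fun s hs t ht => ?_).continuousOn
    calc dist (dist x (ζ s)) (dist x (ζ t)) = |dist (ζ s) x - dist (ζ t) x| := by
          rw [Real.dist_eq, dist_comm x (ζ s), dist_comm x (ζ t)]
      _ ≤ dist (ζ s) (ζ t) := abs_dist_sub_le _ _ _
      _ = (1 : NNReal) * dist s t := by rw [hg s hs t ht, Real.dist_eq]; simp
  have hSeq : {t | t ∈ Set.Ici (0:ℝ) ∧ dist x (ζ t) = Metric.infDist x (ζ '' Set.Ici 0)}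
      = Set.Ici (0:ℝ) ∩ (fun t => dist x (ζ t)) ⁻¹' {Metric.infDist x (ζ '' Set.Ici 0)} := by
    ext t; simp [Set.mem_setOf_eq, Set.mem_inter_iff]
  have hclosed : IsClosed {t | t ∈ Set.Ici (0:ℝ) ∧
      dist x (ζ t) = Metric.infDist x (ζ '' Set.Ici 0)} := by
    rw [hSeq]
    exact hcont.preimage_isClosed_of_isClosed isClosed_Ici isClosed_singleton
  have hne : {t | t ∈ Set.Ici (0:ℝ) ∧
      dist x (ζ t) = Metric.infDist x (ζ '' Set.Ici 0)}.Nonempty := by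
    obtain ⟨y, hy, hyd⟩ := (image_closed hg).exists_infDist_eq_dist
      ⟨ζ 0, Set.mem_image_of_mem _ Set.self_mem_Ici⟩ x
    obtain ⟨t, ht, rfl⟩ := hy
    exact ⟨t, ht, hyd.symm⟩
  have hbdd : BddBelow {t | t ∈ Set.Ici (0:ℝ) ∧
      dist x (ζ t) = Metric.infDist x (ζ '' Set.Ici 0)} := ⟨0, fun y hy => hy.1⟩
  have := hclosed.csInf_mem hne hbdd
  exact this

lemma projParam_self {ζ : ℝ → Y} (hg : GeodesicOn ζ (Set.Ici 0)) {r : ℝ} (hr : 0 ≤ r) :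
    projParam ζ (Set.Ici 0) (ζ r) = r := by
  have hinf : Metric.infDist (ζ r) (ζ '' Set.Ici 0) = 0 :=
    Metric.infDist_zero_of_mem (Set.mem_image_of_mem _ hr)
  have hset : {t | t ∈ Set.Ici (0:ℝ) ∧ dist (ζ r) (ζ t) = Metric.infDist (ζ r) (ζ '' Set.Ici 0)}
      = {r} := by
    ext t
    simp only [Set.mem_setOf_eq, hinf, Set.mem_singleton_iff, Set.mem_Ici]
    constructor
    · rintro ⟨ht, hd⟩
      have := hg r hr t ht
      rw [hd] at this
      have h8 : |r - t| = 0 := this.symm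
      have := abs_eq_zero.mp h8
      linarith
    · rintro rfl
      exact ⟨hr, dist_self _⟩
  show sInf {t | t ∈ Set.Ici (0:ℝ) ∧
    dist (ζ r) (ζ t) = Metric.infDist (ζ r) (ζ '' Set.Ici 0)} = r
  rw [hset, csInf_singleton]

lemma nearSet_closed {B : ℝ} {ζ₁ ζ₂ : ℝ → Y} (hg1 : GeodesicOn ζ₁ (Set.Ici 0)) :
    IsClosed (nearSet B ζ₁ (Set.Ici 0) ζ₂ (Set.Ici 0)) := by
  have hcont : ContinuousOn (fun t => Metric.infDist (ζ₁ t) (ζ₂ '' Set.Ici 0))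
      (Set.Ici 0) := by
    refine (LipschitzOnWith.of_dist_le_mul (K := 1) fun s hs t ht => ?_).continuousOn
    have hd : dist (ζ₁ s) (ζ₁ t) = |s - t| := hg1 s hs t ht
    have i1 := Metric.infDist_le_infDist_add_dist (x := ζ₁ s) (y := ζ₁ t)
      (s := ζ₂ '' Set.Ici 0)
    have i2 := Metric.infDist_le_infDist_add_dist (x := ζ₁ t) (y := ζ₁ s)
      (s := ζ₂ '' Set.Ici 0)
    rw [dist_comm (ζ₁ t) (ζ₁ s)] at i2
    rw [Real.dist_eq, Real.dist_eq, NNReal.coe_one, one_mul, abs_sub_le_iff]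
    constructor <;> linarith
  have hSeq : nearSet B ζ₁ (Set.Ici 0) ζ₂ (Set.Ici 0)
      = Set.Ici (0:ℝ) ∩ (fun t => Metric.infDist (ζ₁ t) (ζ₂ '' Set.Ici 0)) ⁻¹'
          (Set.Iic (6 * B + 2)) := by
    ext t; simp [nearSet, Set.mem_inter_iff]
  rw [hSeq]
  exact hcont.preimage_isClosed_of_isClosed isClosed_Ici isClosed_Iic

end Proper


section TauB

lemma tauB_cond_of_ne_zero {B : ℝ} {x : Y} {ζ₁ ζ₂ : ℝ → Y} {J₁ J₂ : Set ℝ}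
    (h : tauB B x ζ₁ J₁ ζ₂ J₂ ≠ 0) :
    (nearSet B ζ₁ J₁ ζ₂ J₂).Nonempty ∧ (nearSet B ζ₂ J₂ ζ₁ J₁).Nonempty ∧
      (if BddBelow (nearSet B ζ₂ J₂ ζ₁ J₁) then
          ((projParam ζ₁ J₁ (ζ₂ (sInf (nearSet B ζ₂ J₂ ζ₁ J₁))) : ℝ) : EReal) else ⊥) <
        (if BddAbove (nearSet B ζ₂ J₂ ζ₁ J₁) then
          ((projParam ζ₁ J₁ (ζ₂ (sSup (nearSet B ζ₂ J₂ ζ₁ J₁))) : ℝ) : EReal) else ⊤) ∧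
      (if BddBelow (nearSet B ζ₁ J₁ ζ₂ J₂) then
          ((projParam ζ₂ J₂ (ζ₁ (sInf (nearSet B ζ₁ J₁ ζ₂ J₂))) : ℝ) : EReal) else ⊥) <
        (if BddAbove (nearSet B ζ₁ J₁ ζ₂ J₂) then
          ((projParam ζ₂ J₂ (ζ₁ (sSup (nearSet B ζ₁ J₁ ζ₂ J₂))) : ℝ) : EReal) else ⊤) ∧
      (if BddBelow (nearSet B ζ₁ J₁ ζ₂ J₂) then
          ((sInf (nearSet B ζ₁ J₁ ζ₂ J₂) : ℝ) : EReal) else ⊥) ≤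
        ((projParam ζ₁ J₁ x : ℝ) : EReal) ∧
      ((projParam ζ₁ J₁ x : ℝ) : EReal) ≤
        (if BddAbove (nearSet B ζ₁ J₁ ζ₂ J₂) then
          ((sSup (nearSet B ζ₁ J₁ ζ₂ J₂) : ℝ) : EReal) else ⊤) ∧
      (if BddBelow (nearSet B ζ₂ J₂ ζ₁ J₁) then
          ((sInf (nearSet B ζ₂ J₂ ζ₁ J₁) : ℝ) : EReal) else ⊥) ≤
        ((projParam ζ₂ J₂ x : ℝ) : EReal) ∧
      ((projParam ζ₂ J₂ x : ℝ) : EReal) ≤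
        (if BddAbove (nearSet B ζ₂ J₂ ζ₁ J₁) then
          ((sSup (nearSet B ζ₂ J₂ ζ₁ J₁) : ℝ) : EReal) else ⊤) := by
  by_contra hc
  apply h
  rw [tauB, if_neg hc]

lemma tauB_eval {B : ℝ} (x : Y) {ζ₁ ζ₂ : ℝ → Y}
    (h1 : ¬BddAbove (nearSet B ζ₁ (Set.Ici 0) ζ₂ (Set.Ici 0)))
    (h2 : ¬BddAbove (nearSet B ζ₂ (Set.Ici 0) ζ₁ (Set.Ici 0)))
    (hne1 : (nearSet B ζ₁ (Set.Ici 0) ζ₂ (Set.Ici 0)).Nonempty)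
    (hne2 : (nearSet B ζ₂ (Set.Ici 0) ζ₁ (Set.Ici 0)).Nonempty)
    (ha1 : sInf (nearSet B ζ₁ (Set.Ici 0) ζ₂ (Set.Ici 0)) ≤ projParam ζ₁ (Set.Ici 0) x)
    (ha2 : sInf (nearSet B ζ₂ (Set.Ici 0) ζ₁ (Set.Ici 0)) ≤ projParam ζ₂ (Set.Ici 0) x) :
    tauB B x ζ₁ (Set.Ici 0) ζ₂ (Set.Ici 0) =
      min (dist (ζ₁ (projParam ζ₁ (Set.Ici 0) x))
            (ζ₁ (sInf (nearSet B ζ₁ (Set.Ici 0) ζ₂ (Set.Ici 0)))))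
          (dist (ζ₂ (projParam ζ₂ (Set.Ici 0) x))
            (ζ₂ (sInf (nearSet B ζ₂ (Set.Ici 0) ζ₁ (Set.Ici 0))))) := by
  have hb1 : BddBelow (nearSet B ζ₁ (Set.Ici 0) ζ₂ (Set.Ici 0)) := ⟨0, fun y hy => hy.1⟩
  have hb2 : BddBelow (nearSet B ζ₂ (Set.Ici 0) ζ₁ (Set.Ici 0)) := ⟨0, fun y hy => hy.1⟩
  rw [tauB, if_pos]
  · rw [if_pos hb1, if_pos hb2, if_neg h1, if_neg h2, min_eq_left (le_top),
      min_eq_left (le_top), ENNReal.toReal_min ENNReal.ofReal_ne_top ENNReal.ofReal_ne_top,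
      ENNReal.toReal_ofReal dist_nonneg, ENNReal.toReal_ofReal dist_nonneg]
  · refine ⟨hne1, hne2, ?_, ?_, ?_, ?_, ?_, ?_⟩
    · rw [if_pos hb2, if_neg h2]; exact EReal.coe_lt_top _
    · rw [if_pos hb1, if_neg h1]; exact EReal.coe_lt_top _
    · beta_reduce; rw [if_pos hb1]; exact_mod_cast ha1
    · beta_reduce; rw [if_neg h1]; exact le_top
    · beta_reduce; rw [if_pos hb2]; exact_mod_cast ha2
    · beta_reduce; rw [if_neg h2]; exact le_top

end TauB

end TauBAux
/-- Lemma `decay`. Let `ζ₁, ζ₂ : [0,∞) → X` be geodesic rays in a proper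
CAT(0)-space with the same endpoint at infinity, and let `s ≥ 1` be such that
`p = τ_B(ζ₁(s), ζ₁, ζ₂) ≥ 1`. Then `τ_B(ζ₁(s+t), ζ₁, ζ₂) ≥ p + t − 12B − 4` for all
`t ≥ 0`. -/
theorem tauB_grows_along_ray
    {X : Type} [MetricSpace X] [ProperSpace X] [CAT0Space X] (o : X)
    (B : ℝ) (hB : 0 < B) (ζ₁ ζ₂ : ℝ → X)
    (h1 : GeodesicOn ζ₁ (Set.Ici 0)) (h2 : GeodesicOn ζ₂ (Set.Ici 0))
    (η : C(X, ℝ)) (he1 : EndsAt o ζ₁ η) (he2 : EndsAt o ζ₂ η)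
    (s : ℝ) (hs : 1 ≤ s)
    (hp : 1 ≤ tauB B (ζ₁ s) ζ₁ (Set.Ici 0) ζ₂ (Set.Ici 0)) :
    ∀ t : ℝ, 0 ≤ t →
      tauB B (ζ₁ s) ζ₁ (Set.Ici 0) ζ₂ (Set.Ici 0) + t - 12 * B - 4 ≤
        tauB B (ζ₁ (s + t)) ζ₁ (Set.Ici 0) ζ₂ (Set.Ici 0) := by
  intro t ht
  have hs0 : (0:ℝ) ≤ s := le_trans zero_le_one hs
  have hst0 : (0:ℝ) ≤ s + t := by linarith
  have hb1 : BddBelow (nearSet B ζ₁ (Set.Ici 0) ζ₂ (Set.Ici 0)) := ⟨0, fun y hy => hy.1⟩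
  have hb2 : BddBelow (nearSet B ζ₂ (Set.Ici 0) ζ₁ (Set.Ici 0)) := ⟨0, fun y hy => hy.1⟩
  have hne0 : tauB B (ζ₁ s) ζ₁ (Set.Ici 0) ζ₂ (Set.Ici 0) ≠ 0 := by
    intro h; rw [h] at hp; linarith
  obtain ⟨hne1, hne2, -, -, hae1, -, hae2, -⟩ := TauBAux.tauB_cond_of_ne_zero hne0
  have ht₀mem := (TauBAux.nearSet_closed (B := B) (ζ₂ := ζ₂) h1).csInf_mem hne1 hb1
  have hu₀mem := (TauBAux.nearSet_closed (B := B) (ζ₂ := ζ₁) h2).csInf_mem hne2 hb2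
  have ht₀0 : (0:ℝ) ≤ sInf (nearSet B ζ₁ (Set.Ici 0) ζ₂ (Set.Ici 0)) := ht₀mem.1
  have hu₀0 : (0:ℝ) ≤ sInf (nearSet B ζ₂ (Set.Ici 0) ζ₁ (Set.Ici 0)) := hu₀mem.1
  rw [if_pos hb1, TauBAux.projParam_self h1 hs0] at hae1
  rw [if_pos hb2] at hae2
  have ht₀s : sInf (nearSet B ζ₁ (Set.Ici 0) ζ₂ (Set.Ici 0)) ≤ s := by exact_mod_cast hae1
  have hu₀P : sInf (nearSet B ζ₂ (Set.Ici 0) ζ₁ (Set.Ici 0)) ≤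
      projParam ζ₂ (Set.Ici 0) (ζ₁ s) := by exact_mod_cast hae2
  obtain ⟨hPs0, hPsd⟩ := TauBAux.projParam_spec h2 (ζ₁ s)
  obtain ⟨hPst0, hPstd⟩ := TauBAux.projParam_spec h2 (ζ₁ (s + t))
  have hPs0' : (0:ℝ) ≤ projParam ζ₂ (Set.Ici 0) (ζ₁ s) := hPs0
  have hPst0' : (0:ℝ) ≤ projParam ζ₂ (Set.Ici 0) (ζ₁ (s + t)) := hPst0
  have hf : ∀ r, sInf (nearSet B ζ₁ (Set.Ici 0) ζ₂ (Set.Ici 0)) ≤ r →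
      Metric.infDist (ζ₁ r) (ζ₂ '' Set.Ici 0) ≤ 6 * B + 2 := by
    intro r hr
    obtain ⟨hq0, hqd⟩ := TauBAux.projParam_spec h2
      (ζ₁ (sInf (nearSet B ζ₁ (Set.Ici 0) ζ₂ (Set.Ici 0))))
    calc Metric.infDist (ζ₁ r) (ζ₂ '' Set.Ici 0)
        ≤ dist (ζ₁ (sInf (nearSet B ζ₁ (Set.Ici 0) ζ₂ (Set.Ici 0))))
            (ζ₂ (projParam ζ₂ (Set.Ici 0)
              (ζ₁ (sInf (nearSet B ζ₁ (Set.Ici 0) ζ₂ (Set.Ici 0)))))) :=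
          TauBAux.infDist_le_of_asymp h1 h2 he1 he2 ht₀0 hq0 hr
      _ = Metric.infDist (ζ₁ (sInf (nearSet B ζ₁ (Set.Ici 0) ζ₂ (Set.Ici 0))))
            (ζ₂ '' Set.Ici 0) := hqd
      _ ≤ 6 * B + 2 := ht₀mem.2
  have hgb : ∀ u, sInf (nearSet B ζ₂ (Set.Ici 0) ζ₁ (Set.Ici 0)) ≤ u →
      Metric.infDist (ζ₂ u) (ζ₁ '' Set.Ici 0) ≤ 6 * B + 2 := by
    intro u hu
    obtain ⟨hq0, hqd⟩ := TauBAux.projParam_spec h1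
      (ζ₂ (sInf (nearSet B ζ₂ (Set.Ici 0) ζ₁ (Set.Ici 0))))
    calc Metric.infDist (ζ₂ u) (ζ₁ '' Set.Ici 0)
        ≤ dist (ζ₂ (sInf (nearSet B ζ₂ (Set.Ici 0) ζ₁ (Set.Ici 0))))
            (ζ₁ (projParam ζ₁ (Set.Ici 0)
              (ζ₂ (sInf (nearSet B ζ₂ (Set.Ici 0) ζ₁ (Set.Ici 0)))))) :=
          TauBAux.infDist_le_of_asymp h2 h1 he2 he1 hu₀0 hq0 hu
      _ = Metric.infDist (ζ₂ (sInf (nearSet B ζ₂ (Set.Ici 0) ζ₁ (Set.Ici 0))))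
            (ζ₁ '' Set.Ici 0) := hqd
      _ ≤ 6 * B + 2 := hu₀mem.2
  have hub1 : ¬BddAbove (nearSet B ζ₁ (Set.Ici 0) ζ₂ (Set.Ici 0)) := by
    rintro ⟨M, hM⟩
    have hmem : max (M + 1) (sInf (nearSet B ζ₁ (Set.Ici 0) ζ₂ (Set.Ici 0))) ∈
        nearSet B ζ₁ (Set.Ici 0) ζ₂ (Set.Ici 0) :=
      ⟨Set.mem_Ici.mpr (le_trans ht₀0 (le_max_right _ _)), hf _ (le_max_right _ _)⟩
    have h3 := hM hmem
    have h4 := le_max_left (M + 1) (sInf (nearSet B ζ₁ (Set.Ici 0) ζ₂ (Set.Ici 0)))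
    linarith
  have hub2 : ¬BddAbove (nearSet B ζ₂ (Set.Ici 0) ζ₁ (Set.Ici 0)) := by
    rintro ⟨M, hM⟩
    have hmem : max (M + 1) (sInf (nearSet B ζ₂ (Set.Ici 0) ζ₁ (Set.Ici 0))) ∈
        nearSet B ζ₂ (Set.Ici 0) ζ₁ (Set.Ici 0) :=
      ⟨Set.mem_Ici.mpr (le_trans hu₀0 (le_max_right _ _)), hgb _ (le_max_right _ _)⟩
    have h3 := hM hmem
    have h4 := le_max_left (M + 1) (sInf (nearSet B ζ₂ (Set.Ici 0) ζ₁ (Set.Ici 0)))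
    linarith
  have hu₀Pst : sInf (nearSet B ζ₂ (Set.Ici 0) ζ₁ (Set.Ici 0)) ≤
      projParam ζ₂ (Set.Ici 0) (ζ₁ (s + t)) := by
    refine csInf_le hb2 ⟨Set.mem_Ici.mpr hPst0', ?_⟩
    calc Metric.infDist (ζ₂ (projParam ζ₂ (Set.Ici 0) (ζ₁ (s + t)))) (ζ₁ '' Set.Ici 0)
        ≤ dist (ζ₂ (projParam ζ₂ (Set.Ici 0) (ζ₁ (s + t)))) (ζ₁ (s + t)) :=
          Metric.infDist_le_dist_of_mem ⟨s + t, Set.mem_Ici.mpr hst0, rfl⟩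
      _ = dist (ζ₁ (s + t)) (ζ₂ (projParam ζ₂ (Set.Ici 0) (ζ₁ (s + t)))) := dist_comm _ _
      _ = Metric.infDist (ζ₁ (s + t)) (ζ₂ '' Set.Ici 0) := hPstd
      _ ≤ 6 * B + 2 := hf _ (by linarith)
  have hvx := TauBAux.tauB_eval (ζ₁ s) hub1 hub2 hne1 hne2
    (by rw [TauBAux.projParam_self h1 hs0]; exact ht₀s) hu₀P
  have hvx' := TauBAux.tauB_eval (ζ₁ (s + t)) hub1 hub2 hne1 hne2
    (by rw [TauBAux.projParam_self h1 hst0]; linarith) hu₀Pst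
  rw [TauBAux.projParam_self h1 hs0] at hvx
  rw [TauBAux.projParam_self h1 hst0] at hvx'
  have hd1 : dist (ζ₁ s) (ζ₁ (sInf (nearSet B ζ₁ (Set.Ici 0) ζ₂ (Set.Ici 0)))) =
      s - sInf (nearSet B ζ₁ (Set.Ici 0) ζ₂ (Set.Ici 0)) := by
    rw [h1 s (Set.mem_Ici.mpr hs0) _ (Set.mem_Ici.mpr ht₀0), abs_of_nonneg (by linarith)]
  have hd1' : dist (ζ₁ (s + t)) (ζ₁ (sInf (nearSet B ζ₁ (Set.Ici 0) ζ₂ (Set.Ici 0)))) =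
      s + t - sInf (nearSet B ζ₁ (Set.Ici 0) ζ₂ (Set.Ici 0)) := by
    rw [h1 (s + t) (Set.mem_Ici.mpr hst0) _ (Set.mem_Ici.mpr ht₀0),
      abs_of_nonneg (by linarith)]
  have hd2 : dist (ζ₂ (projParam ζ₂ (Set.Ici 0) (ζ₁ s)))
      (ζ₂ (sInf (nearSet B ζ₂ (Set.Ici 0) ζ₁ (Set.Ici 0)))) =
      projParam ζ₂ (Set.Ici 0) (ζ₁ s) - sInf (nearSet B ζ₂ (Set.Ici 0) ζ₁ (Set.Ici 0)) := by
    rw [h2 _ (Set.mem_Ici.mpr hPs0') _ (Set.mem_Ici.mpr hu₀0), abs_of_nonneg (by linarith)]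
  have hd2' : dist (ζ₂ (projParam ζ₂ (Set.Ici 0) (ζ₁ (s + t))))
      (ζ₂ (sInf (nearSet B ζ₂ (Set.Ici 0) ζ₁ (Set.Ici 0)))) =
      projParam ζ₂ (Set.Ici 0) (ζ₁ (s + t)) -
        sInf (nearSet B ζ₂ (Set.Ici 0) ζ₁ (Set.Ici 0)) := by
    rw [h2 _ (Set.mem_Ici.mpr hPst0') _ (Set.mem_Ici.mpr hu₀0), abs_of_nonneg (by linarith)]
  have hfs : dist (ζ₁ s) (ζ₂ (projParam ζ₂ (Set.Ici 0) (ζ₁ s))) ≤ 6 * B + 2 := by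
    rw [hPsd]; exact hf s ht₀s
  have hfst : dist (ζ₁ (s + t)) (ζ₂ (projParam ζ₂ (Set.Ici 0) (ζ₁ (s + t)))) ≤ 6 * B + 2 := by
    rw [hPstd]; exact hf (s + t) (by linarith)
  have lb1 := TauBAux.lower_bound h1 h2 he1 he2 hs0 hPs0'
  have lb2 := TauBAux.lower_bound h1 h2 he1 he2 hst0 hPst0'
  rw [abs_le] at lb1 lb2
  have key : projParam ζ₂ (Set.Ici 0) (ζ₁ s) + t - 12 * B - 4 ≤
      projParam ζ₂ (Set.Ici 0) (ζ₁ (s + t)) := by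
    have l1 := lb1.2
    have l2 := lb2.1
    linarith
  rw [hvx, hvx', hd1, hd1', hd2, hd2']
  refine le_min ?_ ?_
  · have h5 := min_le_left
      (s - sInf (nearSet B ζ₁ (Set.Ici 0) ζ₂ (Set.Ici 0)))
      (projParam ζ₂ (Set.Ici 0) (ζ₁ s) - sInf (nearSet B ζ₂ (Set.Ici 0) ζ₁ (Set.Ici 0)))
    linarith
  · have h5 := min_le_right
      (s - sInf (nearSet B ζ₁ (Set.Ici 0) ζ₂ (Set.Ici 0)))
      (projParam ζ₂ (Set.Ici 0) (ζ₁ s) - sInf (nearSet B ζ₂ (Set.Ici 0) ζ₁ (Set.Ici 0)))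
    linarith

end
end

section
/- For B > 0, the space 𝒜(B) × X admits a natural Iso(X)-invariant, ι-invariant distance function d̃ inducing the product topology, and there is a number c > 0 such that for every x ∈ X the restriction of d̃ to 𝒜(B) × {x} satisfies c δ_x(α, β) ≤ d̃((α, x), (β, x)) ≤ δ_x(α, β) for all α, β ∈ 𝒜(B). -/
open Metric Set Filter Topology
open scoped ENNReal Classical Pointwise

noncomputable section

universe u

variable {X : Type u} [MetricSpace X]

/-! ### Auxiliary lemmas for Statement 13 -/

section Aux13

lemma eval_o_eq_zero_of_tendsto {o : X} {γ : ℝ → X} {ξ : C(X, ℝ)} {l : Filter ℝ} [l.NeBot]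
    (h : Filter.Tendsto (fun t => bcomp o (γ t)) l (nhds ξ)) : ξ o = 0 := by
  have h1 : Filter.Tendsto (fun t => (bcomp o (γ t)) o) l (nhds (ξ o)) :=
    ((continuous_eval_const o).tendsto ξ).comp h
  have h2 : (fun t => (bcomp o (γ t)) o) = fun _ => (0 : ℝ) := by
    funext t; simp [bcomp]
  rw [h2] at h1
  exact (tendsto_nhds_unique h1 tendsto_const_nhds)

lemma ABSet_fst_eval {o : X} {B : ℝ} {p : C(X, ℝ) × C(X, ℝ)} (hp : p ∈ ABSet o B) :
    p.1 o = 0 := by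
  obtain ⟨-, γ, -, hb, -⟩ := hp
  exact eval_o_eq_zero_of_tendsto hb

lemma ABSet_snd_eval {o : X} {B : ℝ} {p : C(X, ℝ) × C(X, ℝ)} (hp : p ∈ ABSet o B) :
    p.2 o = 0 := by
  obtain ⟨-, γ, -, -, he⟩ := hp
  exact eval_o_eq_zero_of_tendsto he

lemma isomEquiv_dist_apply (g : X ≃ᵢ X) (x w : X) : dist (g x) w = dist x (g.symm w) := by
  calc dist (g x) w = dist (g.symm (g x)) (g.symm w) := (g.symm.dist_eq _ _).symm
    _ = dist x (g.symm w) := by rw [g.symm_apply_apply]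

lemma bcomp_isom (o : X) (g : X ≃ᵢ X) (x : X) :
    bcomp o (g x) = boundaryAct o g (bcomp o x) := by
  ext z
  show dist (g x) z - dist (g x) o =
    (dist x (g.symm z) - dist x o) - (dist x (g.symm o) - dist x o)
  rw [isomEquiv_dist_apply g x z, isomEquiv_dist_apply g x o]
  ring

lemma boundaryAct_continuous (o : X) (g : X ≃ᵢ X) : Continuous (boundaryAct o g) := by
  have h : boundaryAct o g = fun ξ : C(X, ℝ) =>
      ξ.comp ⟨⇑g.symm, g.symm.continuous⟩ - ContinuousMap.const X (ξ (g.symm o)) := by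
    funext ξ; ext z; simp [boundaryAct]
  rw [h]
  exact (ContinuousMap.continuous_precomp _).sub
    ((ContinuousMap.continuous_const').comp (continuous_eval_const _))

lemma boundaryAct_inv (o : X) (g : X ≃ᵢ X) {ξ : C(X, ℝ)} (h0 : ξ o = 0) :
    boundaryAct o g.symm (boundaryAct o g ξ) = ξ := by
  ext z
  show ((boundaryAct o g ξ) (g.symm.symm z) - (boundaryAct o g ξ) (g.symm.symm o)) = ξ z
  simp only [IsometryEquiv.symm_symm]
  show (ξ (g.symm (g z)) - ξ (g.symm o)) - (ξ (g.symm (g o)) - ξ (g.symm o)) = ξ z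
  rw [g.symm_apply_apply, g.symm_apply_apply, h0]
  ring

lemma boundaryAct_inv' (o : X) (g : X ≃ᵢ X) {ξ : C(X, ℝ)} (h0 : ξ o = 0) :
    boundaryAct o g (boundaryAct o g.symm ξ) = ξ := by
  have h := boundaryAct_inv o g.symm (ξ := ξ) h0
  rwa [IsometryEquiv.symm_symm] at h

lemma contractingOn_isom {B : ℝ} {γ : ℝ → X} (g : X ≃ᵢ X)
    (h : ContractingOn B γ Set.univ) : ContractingOn B (⇑g ∘ γ) Set.univ := by
  obtain ⟨hg, hc⟩ := h
  have himg : (⇑g ∘ γ) '' Set.univ = ⇑g '' (γ '' Set.univ) := by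
    rw [Set.image_comp]
  set A := γ '' Set.univ with hA
  have hinf : ∀ x : X, Metric.infDist x (⇑g '' A) = Metric.infDist (g.symm x) A := by
    intro x
    conv_lhs => rw [← g.apply_symm_apply x]
    exact Metric.infDist_image g.isometry
  have hproj : ∀ x : X, projSet (⇑g '' A) x = ⇑g '' projSet A (g.symm x) := by
    intro x
    ext y
    constructor
    · rintro ⟨⟨w, hw, rfl⟩, hdy⟩
      refine ⟨w, ⟨hw, ?_⟩, rfl⟩
      rw [hinf x] at hdy
      rw [← hdy, ← g.symm.dist_eq x (g w), g.symm_apply_apply]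
    · rintro ⟨w, ⟨hw, hdw⟩, rfl⟩
      refine ⟨⟨w, hw, rfl⟩, ?_⟩
      rw [hinf x, ← hdw, dist_comm x (g w), isomEquiv_dist_apply g w x, dist_comm]
  constructor
  · intro s hs t ht
    show dist (g (γ s)) (g (γ t)) = |s - t|
    rw [g.dist_eq]
    exact hg s hs t ht
  · intro z r hdisj
    rw [himg] at hdisj ⊢
    have hdisj' : Disjoint (Metric.closedBall (g.symm z) r) A := by
      have hpre := hdisj.preimage ⇑g
      rwa [g.preimage_closedBall, Set.preimage_image_eq A g.injective] at hpre
    have hun : (⋃ x ∈ Metric.closedBall z r, projSet (⇑g '' A) x)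
        = ⇑g '' (⋃ w ∈ Metric.closedBall (g.symm z) r, projSet A w) := by
      rw [Set.image_iUnion₂]
      ext y
      simp only [Set.mem_iUnion, hproj]
      constructor
      · rintro ⟨x, hx, hy⟩
        refine ⟨g.symm x, ?_, hy⟩
        rw [Metric.mem_closedBall] at hx ⊢
        rw [← g.symm.dist_eq x z] at hx
        exact hx
      · rintro ⟨w, hw, hy⟩
        refine ⟨g w, ?_, ?_⟩
        · rw [Metric.mem_closedBall] at hw ⊢
          rw [isomEquiv_dist_apply g w z]
          exact hw
        · rwa [g.symm_apply_apply]
    rw [hun]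
    refine le_trans (le_of_eq (g.isometry.ediam_image _)) ?_
    exact hc (g.symm z) r hdisj'

lemma beginsAt_isom (o : X) (g : X ≃ᵢ X) {γ : ℝ → X} {ξ : C(X, ℝ)} (h : BeginsAt o γ ξ) :
    BeginsAt o (⇑g ∘ γ) (boundaryAct o g ξ) := by
  have heq : (fun t => bcomp o ((⇑g ∘ γ) t)) = fun t => boundaryAct o g (bcomp o (γ t)) := by
    funext t; exact bcomp_isom o g (γ t)
  show Filter.Tendsto _ _ _
  rw [heq]
  exact ((boundaryAct_continuous o g).tendsto ξ).comp h

lemma endsAt_isom (o : X) (g : X ≃ᵢ X) {γ : ℝ → X} {ξ : C(X, ℝ)} (h : EndsAt o γ ξ) :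
    EndsAt o (⇑g ∘ γ) (boundaryAct o g ξ) := by
  have heq : (fun t => bcomp o ((⇑g ∘ γ) t)) = fun t => boundaryAct o g (bcomp o (γ t)) := by
    funext t; exact bcomp_isom o g (γ t)
  show Filter.Tendsto _ _ _
  rw [heq]
  exact ((boundaryAct_continuous o g).tendsto ξ).comp h

lemma pairAct_mem (o : X) {B : ℝ} (g : X ≃ᵢ X) {p : C(X, ℝ) × C(X, ℝ)}
    (hp : p ∈ ABSet o B) : pairAct o g p ∈ ABSet o B := by
  obtain ⟨hne, γ, hγ, hb, he⟩ := hp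
  have h1 : p.1 o = 0 := eval_o_eq_zero_of_tendsto hb
  have h2 : p.2 o = 0 := eval_o_eq_zero_of_tendsto he
  refine ⟨?_, ⇑g ∘ γ, contractingOn_isom g hγ, beginsAt_isom o g hb, endsAt_isom o g he⟩
  intro hcontra
  apply hne
  have h3 := congrArg (boundaryAct o g.symm) hcontra
  simp only [pairAct] at h3
  rwa [boundaryAct_inv o g h1, boundaryAct_inv o g h2] at h3

lemma pairAct_inv (o : X) {B : ℝ} (g : X ≃ᵢ X) {p : C(X, ℝ) × C(X, ℝ)}
    (hp : p ∈ ABSet o B) : pairAct o g (pairAct o g.symm p) = p := by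
  have h1 : p.1 o = 0 := ABSet_fst_eval hp
  have h2 : p.2 o = 0 := ABSet_snd_eval hp
  exact Prod.ext (boundaryAct_inv' o g h1) (boundaryAct_inv' o g h2)

lemma swap_mem_ABSet (o : X) {B : ℝ} {p : C(X, ℝ) × C(X, ℝ)} (hp : p ∈ ABSet o B) :
    (p.2, p.1) ∈ ABSet o B := by
  obtain ⟨hne, γ, ⟨hg, hc⟩, hb, he⟩ := hp
  have himg : (fun t => γ (-t)) '' Set.univ = γ '' Set.univ := by
    ext x
    simp only [Set.image_univ, Set.mem_range]
    exact ⟨fun ⟨t, ht⟩ => ⟨-t, ht⟩, fun ⟨t, ht⟩ => ⟨-t, by simpa using ht⟩⟩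
  refine ⟨Ne.symm hne, fun t => γ (-t), ⟨?_, ?_⟩, ?_, ?_⟩
  · intro s _ t _
    rw [hg (-s) (Set.mem_univ _) (-t) (Set.mem_univ _)]
    rw [show -s - -t = -(s - t) by ring, abs_neg]
  · intro z r hdisj
    rw [himg] at hdisj ⊢
    exact hc z r hdisj
  · exact he.comp tendsto_neg_atBot_atTop
  · exact hb.comp tendsto_neg_atTop_atBot

lemma exp_neg_lipschitz {a b : ℝ} (ha : 0 ≤ a) (hb : 0 ≤ b) :
    |Real.exp (-a) - Real.exp (-b)| ≤ |a - b| := by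
  wlog h : b ≤ a with H
  · rw [abs_sub_comm, abs_sub_comm a b]
    exact H hb ha (le_of_not_ge h)
  · have e1 : Real.exp (-b) ≤ 1 := by
      calc Real.exp (-b) ≤ Real.exp 0 := Real.exp_le_exp.2 (by linarith)
        _ = 1 := Real.exp_zero
    have e2 : 1 - Real.exp (-(a - b)) ≤ a - b := by
      have := Real.add_one_le_exp (-(a - b)); linarith
    have e3 : Real.exp (-a) = Real.exp (-b) * Real.exp (-(a - b)) := by
      rw [← Real.exp_add]; congr 1; ring
    have e4 : Real.exp (-a) ≤ Real.exp (-b) := Real.exp_le_exp.2 (by linarith)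
    have e5 : (0:ℝ) < Real.exp (-(a - b)) := Real.exp_pos _
    have e6 : Real.exp (-(a - b)) ≤ 1 := by
      calc Real.exp (-(a - b)) ≤ Real.exp 0 := Real.exp_le_exp.2 (by linarith)
        _ = 1 := Real.exp_zero
    rw [abs_of_nonpos (by linarith), abs_of_nonneg (by linarith)]
    have e7 : Real.exp (-b) - Real.exp (-a) = Real.exp (-b) * (1 - Real.exp (-(a - b))) := by
      rw [e3]; ring
    have e8 : Real.exp (-b) * (1 - Real.exp (-(a - b))) ≤ 1 * (1 - Real.exp (-(a - b))) := by
      apply mul_le_mul_of_nonneg_right e1 (by linarith)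
    have e9 : Real.exp (-b) - Real.exp (-a) ≤ a - b := by rw [e7]; linarith
    linarith

/-- The kernel used to build the product metric. -/
def dF (o : X) (B χ : ℝ) (δ : X → ↥(ABSet o B) → ↥(ABSet o B) → ℝ)
    (u i : ↥(ABSet o B) × X) : ℝ :=
  Real.exp (-(χ * dist u.2 i.2)) * δ i.2 u.1 i.1

/-- The boundary part of the product metric. -/
def dD (o : X) (B χ : ℝ) (δ : X → ↥(ABSet o B) → ↥(ABSet o B) → ℝ)
    (u v : ↥(ABSet o B) × X) : ℝ :=
  ⨆ i : ↥(ABSet o B) × X, |dF o B χ δ u i - dF o B χ δ v i|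

end Aux13

/-- Lemma `productmetric`. `𝒜(B) × X` admits a natural `Iso(X)`-invariant,
`ι`-invariant distance function `d̃` inducing the product topology, and there is `c > 0`
such that for every `x ∈ X` the restriction of `d̃` to `𝒜(B) × {x}` is pinched between
`c δ_x` and `δ_x`. -/
theorem product_space_invariant_metric
    {X : Type} [MetricSpace X] [ProperSpace X] [CAT0Space X] (o : X)
    (B : ℝ) (hB : 0 < B) (χ c₀ : ℝ) (hχ : 0 < χ) (hc₀ : 0 < c₀)
    (δ : X → ↥(ABSet o B) → ↥(ABSet o B) → ℝ)
    (hδ : IsDeltaFamily o B χ c₀ δ) :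
    ∃ d' : (↥(ABSet o B) × X) → (↥(ABSet o B) × X) → ℝ,
      (∀ u v, 0 ≤ d' u v) ∧ (∀ u v, d' u v = 0 ↔ u = v) ∧ (∀ u v, d' u v = d' v u) ∧
      (∀ u v w, d' u w ≤ d' u v + d' v w) ∧
      (∀ s : Set (↥(ABSet o B) × X),
        IsOpen s ↔ ∀ a ∈ s, ∃ ε > 0, ∀ b, d' a b < ε → b ∈ s) ∧
      (∀ (g : X ≃ᵢ X) (α β : ↥(ABSet o B)) (x y : X)
          (hα : pairAct o g ↑α ∈ ABSet o B) (hβ : pairAct o g ↑β ∈ ABSet o B),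
          d' (⟨pairAct o g ↑α, hα⟩, g x) (⟨pairAct o g ↑β, hβ⟩, g y) = d' (α, x) (β, y)) ∧
      (∀ (α β : ↥(ABSet o B)) (x y : X)
          (hα : ((α : C(X, ℝ) × C(X, ℝ)).2, (α : C(X, ℝ) × C(X, ℝ)).1) ∈ ABSet o B)
          (hβ : ((β : C(X, ℝ) × C(X, ℝ)).2, (β : C(X, ℝ) × C(X, ℝ)).1) ∈ ABSet o B),
          d' (⟨((α : C(X, ℝ) × C(X, ℝ)).2, (α : C(X, ℝ) × C(X, ℝ)).1), hα⟩, x)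
             (⟨((β : C(X, ℝ) × C(X, ℝ)).2, (β : C(X, ℝ) × C(X, ℝ)).1), hβ⟩, y) =
            d' (α, x) (β, y)) ∧
      ∃ c > 0, ∀ (x : X) (α β : ↥(ABSet o B)),
        c * δ x α β ≤ d' (α, x) (β, x) ∧ d' (α, x) (β, x) ≤ δ x α β := by
  obtain ⟨h1, h2, h3, h4, h5, -, h7, h8, h9, h10⟩ := hδ
  -- `δ` is bounded by 1
  have hδle1 : ∀ (x : X) (α β : ↥(ABSet o B)), δ x α β ≤ 1 := by
    intro x α β
    refine le_trans (h8 x α β).2 ?_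
    unfold tildeDelta
    split
    · exact zero_le_one
    · have hτ : 0 ≤ tauBPair o B x (↑α) (↑β) := by
        apply Real.sInf_nonneg
        rintro r ⟨ζ₁, ζ₂, -, -, -, -, -, -, rfl⟩
        have hgen : ∀ (C : Prop) (inst : Decidable C) (A : ℝ≥0∞),
            (0:ℝ) ≤ @ite _ C inst A.toReal 0 := by
          intro C inst A
          by_cases h : C
          · rw [if_pos h]; exact ENNReal.toReal_nonneg
          · rw [if_neg h]
        unfold tauB
        dsimp only
        exact hgen _ _ _
      calc Real.exp (-(χ * tauBPair o B x (↑α) (↑β))) ≤ Real.exp 0 :=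
            Real.exp_le_exp.2 (by nlinarith)
        _ = 1 := Real.exp_zero
  have hF0 : ∀ u i, 0 ≤ dF o B χ δ u i := fun u i =>
    mul_nonneg (Real.exp_pos _).le (h1 _ _ _)
  have hFle : ∀ u i, dF o B χ δ u i ≤ 1 := by
    intro u i
    have he : Real.exp (-(χ * dist u.2 i.2)) ≤ 1 := by
      calc Real.exp (-(χ * dist u.2 i.2)) ≤ Real.exp 0 :=
          Real.exp_le_exp.2 (neg_nonpos.2 (mul_nonneg hχ.le dist_nonneg))
        _ = 1 := Real.exp_zero
    calc dF o B χ δ u i ≤ 1 * 1 :=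
        mul_le_mul he (hδle1 _ _ _) (h1 _ _ _) zero_le_one
      _ = 1 := mul_one 1
  have habs : ∀ u v i, |dF o B χ δ u i - dF o B χ δ v i| ≤ 1 := by
    intro u v i
    rw [abs_sub_le_iff]
    constructor <;> linarith [hF0 u i, hF0 v i, hFle u i, hFle v i]
  have hbdd : ∀ u v, BddAbove (Set.range fun i => |dF o B χ δ u i - dF o B χ δ v i|) := by
    intro u v
    exact ⟨1, by rintro y ⟨i, rfl⟩; exact habs u v i⟩
  have hΔnn : ∀ u v, 0 ≤ dD o B χ δ u v := fun u v =>
    Real.iSup_nonneg fun i => abs_nonneg _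
  have hΔle : ∀ u v (a : ℝ), 0 ≤ a →
      (∀ i, |dF o B χ δ u i - dF o B χ δ v i| ≤ a) → dD o B χ δ u v ≤ a :=
    fun u v a ha h => Real.iSup_le h ha
  have hΔge : ∀ u v i, |dF o B χ δ u i - dF o B χ δ v i| ≤ dD o B χ δ u v :=
    fun u v i => le_ciSup (hbdd u v) i
  -- key pointwise estimate at a common basepoint
  have hkey : ∀ (x : X) (α β : ↥(ABSet o B)) (i : ↥(ABSet o B) × X),
      |dF o B χ δ (α, x) i - dF o B χ δ (β, x) i| ≤ δ x α β := by
    rintro x α β ⟨θ, z⟩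
    show |Real.exp (-(χ * dist x z)) * δ z α θ - Real.exp (-(χ * dist x z)) * δ z β θ| ≤ _
    rw [← mul_sub, abs_mul, abs_of_pos (Real.exp_pos _)]
    have hsub : |δ z α θ - δ z β θ| ≤ δ z α β := by
      rw [abs_sub_le_iff]
      constructor
      · have := h4 z α β θ; linarith
      · have ht := h4 z β α θ
        have hs := h3 z α β
        linarith
    calc Real.exp (-(χ * dist x z)) * |δ z α θ - δ z β θ|
        ≤ Real.exp (-(χ * dist x z)) * (Real.exp (χ * dist x z) * δ x α β) := by
          apply mul_le_mul_of_nonneg_left _ (Real.exp_pos _).le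
          exact hsub.trans (h9 x z α β).2
      _ = δ x α β := by
          rw [← mul_assoc, ← Real.exp_add]
          simp
  -- value on the diagonal fibre
  have hdiag : ∀ (x : X) (α β : ↥(ABSet o B)), dD o B χ δ (α, x) (β, x) = δ x α β := by
    intro x α β
    apply le_antisymm
    · exact hΔle _ _ _ (h1 _ _ _) (hkey x α β)
    · have hββ : δ x β β = 0 := (h2 x β β).2 rfl
      have hg := hΔge (α, x) (β, x) (β, x)
      simpa [dF, dist_self, hββ, abs_of_nonneg (h1 x α β)] using hg
  have hlow : ∀ (x y : X) (α β : ↥(ABSet o B)), δ x α β ≤ dD o B χ δ (α, x) (β, y) := by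
    intro x y α β
    have hββ : δ x β β = 0 := (h2 x β β).2 rfl
    have hg := hΔge (α, x) (β, y) (β, x)
    simpa [dF, dist_self, hββ, abs_of_nonneg (h1 x α β)] using hg
  have hupper : ∀ (x y : X) (α β : ↥(ABSet o B)),
      dD o B χ δ (α, x) (β, y) ≤ δ x α β + χ * dist x y := by
    intro x y α β
    apply hΔle _ _ _ (add_nonneg (h1 _ _ _) (mul_nonneg hχ.le dist_nonneg))
    rintro ⟨θ, z⟩
    have t1 : |dF o B χ δ (α, x) (θ, z) - dF o B χ δ (β, x) (θ, z)| ≤ δ x α β :=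
      hkey x α β (θ, z)
    have t2 : |dF o B χ δ (β, x) (θ, z) - dF o B χ δ (β, y) (θ, z)| ≤ χ * dist x y := by
      show |Real.exp (-(χ * dist x z)) * δ z β θ - Real.exp (-(χ * dist y z)) * δ z β θ| ≤ _
      rw [← sub_mul, abs_mul]
      have hlip : |Real.exp (-(χ * dist x z)) - Real.exp (-(χ * dist y z))| ≤ χ * dist x y := by
        refine le_trans (exp_neg_lipschitz (mul_nonneg hχ.le dist_nonneg)
          (mul_nonneg hχ.le dist_nonneg)) ?_
        rw [← mul_sub, abs_mul, abs_of_pos hχ]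
        exact mul_le_mul_of_nonneg_left (abs_dist_sub_le x y z) hχ.le
      calc |Real.exp (-(χ * dist x z)) - Real.exp (-(χ * dist y z))| * |δ z β θ|
          ≤ (χ * dist x y) * 1 := by
            apply mul_le_mul hlip _ (abs_nonneg _) (mul_nonneg hχ.le dist_nonneg)
            rw [abs_of_nonneg (h1 _ _ _)]
            exact hδle1 _ _ _
        _ = χ * dist x y := mul_one _
    calc |dF o B χ δ (α, x) (θ, z) - dF o B χ δ (β, y) (θ, z)|
        ≤ |dF o B χ δ (α, x) (θ, z) - dF o B χ δ (β, x) (θ, z)| +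
          |dF o B χ δ (β, x) (θ, z) - dF o B χ δ (β, y) (θ, z)| := abs_sub_le _ _ _
      _ ≤ δ x α β + χ * dist x y := add_le_add t1 t2
  -- transport of the sup along surjections compatible with `dF`
  have hsup_eq : ∀ (u v u' v' : ↥(ABSet o B) × X) (T : ↥(ABSet o B) × X → ↥(ABSet o B) × X),
      Function.Surjective T → (∀ i, dF o B χ δ u' (T i) = dF o B χ δ u i) →
      (∀ i, dF o B χ δ v' (T i) = dF o B χ δ v i) →
      dD o B χ δ u' v' = dD o B χ δ u v := by
    intro u v u' v' T hT hFu hFv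
    show (⨆ i, |dF o B χ δ u' i - dF o B χ δ v' i|) = ⨆ i, |dF o B χ δ u i - dF o B χ δ v i|
    rw [← hT.iSup_comp (fun i => |dF o B χ δ u' i - dF o B χ δ v' i|)]
    apply iSup_congr
    intro i
    rw [hFu, hFv]
  refine ⟨fun u v => dist u.2 v.2 + dD o B χ δ u v, ?_, ?_, ?_, ?_, ?_, ?_, ?_, ?_⟩
  · exact fun u v => add_nonneg dist_nonneg (hΔnn u v)
  · rintro ⟨α, x⟩ ⟨β, y⟩
    constructor
    · intro h
      have hd1 : dist x y = 0 := le_antisymm (by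
        have := hΔnn (α, x) (β, y); simp only at h; linarith) dist_nonneg
      have hd2 : dD o B χ δ (α, x) (β, y) = 0 := by
        have := hΔnn (α, x) (β, y); simp only at h
        have hd : (0:ℝ) ≤ dist x y := dist_nonneg
        linarith
      have hxy : x = y := dist_eq_zero.1 hd1
      subst hxy
      have hδ0 : δ x α β = 0 := le_antisymm (by
        have := hlow x x α β; linarith) (h1 _ _ _)
      have hab : α = β := (h2 x α β).1 hδ0
      rw [hab]
    · rintro h
      have hxy : x = y := congrArg Prod.snd h
      have hab : α = β := congrArg Prod.fst h
      subst hxy; subst hab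
      show dist x x + dD o B χ δ (α, x) (α, x) = 0
      rw [dist_self, zero_add]
      refine le_antisymm (hΔle _ _ 0 le_rfl fun i => by simp) (hΔnn _ _)
  · intro u v
    show dist u.2 v.2 + dD o B χ δ u v = dist v.2 u.2 + dD o B χ δ v u
    rw [dist_comm]
    congr 1
    show (⨆ i, |dF o B χ δ u i - dF o B χ δ v i|) = ⨆ i, |dF o B χ δ v i - dF o B χ δ u i|
    exact iSup_congr fun i => abs_sub_comm _ _
  · intro u v w
    have htri : dD o B χ δ u w ≤ dD o B χ δ u v + dD o B χ δ v w := by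
      apply hΔle _ _ _ (add_nonneg (hΔnn _ _) (hΔnn _ _))
      intro i
      exact (abs_sub_le _ _ _).trans (add_le_add (hΔge u v i) (hΔge v w i))
    have := dist_triangle u.2 v.2 w.2
    show dist u.2 w.2 + dD o B χ δ u w ≤
      (dist u.2 v.2 + dD o B χ δ u v) + (dist v.2 w.2 + dD o B χ δ v w)
    linarith
  · intro s
    constructor
    · intro hs a ha
      obtain ⟨α, x⟩ := a
      rw [isOpen_prod_iff] at hs
      obtain ⟨U, V, hU, hV, hαU, hxV, hUV⟩ := hs α x ha
      obtain ⟨ε₁, hε₁, hball₁⟩ := (h5 x U).1 hU α hαU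
      obtain ⟨ε₂, hε₂, hball₂⟩ := Metric.isOpen_iff.1 hV x hxV
      refine ⟨min ε₁ ε₂, lt_min hε₁ hε₂, ?_⟩
      rintro ⟨β, y⟩ hd
      simp only at hd
      apply hUV
      refine ⟨hball₁ β ?_, hball₂ ?_⟩
      · have hl := hlow x y α β
        have hd' : dist x y + dD o B χ δ (α, x) (β, y) < ε₁ :=
          lt_of_lt_of_le hd (min_le_left _ _)
        have : (0:ℝ) ≤ dist x y := dist_nonneg
        linarith
      · rw [Metric.mem_ball, dist_comm]
        have hd' : dist x y + dD o B χ δ (α, x) (β, y) < ε₂ :=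
          lt_of_lt_of_le hd (min_le_right _ _)
        have := hΔnn (α, x) (β, y)
        linarith
    · intro hcrit
      rw [isOpen_prod_iff]
      intro α x hax
      obtain ⟨ε, hε, hball⟩ := hcrit (α, x) hax
      have h1χ : (0:ℝ) < 1 + χ := by linarith
      have hrpos : 0 < ε / (2 * (1 + χ)) := by positivity
      refine ⟨{β | δ x α β < ε / (2 * (1 + χ))}, Metric.ball x (ε / (2 * (1 + χ))),
        ?_, Metric.isOpen_ball, ?_, Metric.mem_ball_self hrpos, ?_⟩
      · rw [h5 x]
        intro b hb
        simp only [Set.mem_setOf_eq] at hb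
        refine ⟨ε / (2 * (1 + χ)) - δ x α b, by linarith, fun c hc => ?_⟩
        have := h4 x α b c
        simp only [Set.mem_setOf_eq]
        linarith
      · have : δ x α α = 0 := (h2 x α α).2 rfl
        simp only [Set.mem_setOf_eq, this]
        exact hrpos
      · rintro ⟨β, y⟩ ⟨hβ, hy⟩
        simp only [Set.mem_setOf_eq] at hβ
        apply hball
        have hu := hupper x y α β
        have hdy : dist x y < ε / (2 * (1 + χ)) := by
          rw [Metric.mem_ball] at hy
          rwa [dist_comm] at hy
        have hrhalf : (1 + χ) * (ε / (2 * (1 + χ))) = ε / 2 := by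
          field_simp
        have hr2 : ε / (2 * (1 + χ)) ≤ ε / 2 := by
          apply div_le_div_of_nonneg_left hε.le
          · linarith
          · linarith
        show dist x y + dD o B χ δ (α, x) (β, y) < ε
        have hmul : (1 + χ) * dist x y < (1 + χ) * (ε / (2 * (1 + χ))) :=
          mul_lt_mul_of_pos_left hdy h1χ
        nlinarith [mul_nonneg hχ.le (dist_nonneg (x := x) (y := y))]
  · intro g α β x y hα hβ
    have hdist : dist (g x) (g y) = dist x y := g.dist_eq x y
    have hΔeq : dD o B χ δ (⟨pairAct o g ↑α, hα⟩, g x) (⟨pairAct o g ↑β, hβ⟩, g y)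
        = dD o B χ δ (α, x) (β, y) := by
      apply hsup_eq _ _ _ _ (fun i => (⟨pairAct o g ↑i.1, pairAct_mem o g i.1.2⟩, g i.2))
      · rintro ⟨θ, z⟩
        refine ⟨(⟨pairAct o g.symm ↑θ, pairAct_mem o g.symm θ.2⟩, g.symm z), ?_⟩
        refine Prod.ext (Subtype.ext ?_) (g.apply_symm_apply z)
        exact pairAct_inv o g θ.2
      · rintro ⟨θ, z⟩
        show Real.exp (-(χ * dist (g x) (g z))) *
            δ (g z) ⟨pairAct o g ↑α, hα⟩ ⟨pairAct o g ↑θ, pairAct_mem o g θ.2⟩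
          = Real.exp (-(χ * dist x z)) * δ z α θ
        rw [g.dist_eq, h10 g z α θ hα (pairAct_mem o g θ.2)]
      · rintro ⟨θ, z⟩
        show Real.exp (-(χ * dist (g y) (g z))) *
            δ (g z) ⟨pairAct o g ↑β, hβ⟩ ⟨pairAct o g ↑θ, pairAct_mem o g θ.2⟩
          = Real.exp (-(χ * dist y z)) * δ z β θ
        rw [g.dist_eq, h10 g z β θ hβ (pairAct_mem o g θ.2)]
    show dist (g x) (g y) + _ = dist x y + _
    rw [hdist, hΔeq]
  · intro α β x y hα hβ
    have hΔeq : dD o B χ δ (⟨((α : C(X, ℝ) × C(X, ℝ)).2, (α : C(X, ℝ) × C(X, ℝ)).1), hα⟩, x)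
          (⟨((β : C(X, ℝ) × C(X, ℝ)).2, (β : C(X, ℝ) × C(X, ℝ)).1), hβ⟩, y)
        = dD o B χ δ (α, x) (β, y) := by
      apply hsup_eq _ _ _ _
        (fun i => (⟨(((i.1 : C(X, ℝ) × C(X, ℝ))).2, ((i.1 : C(X, ℝ) × C(X, ℝ))).1),
          swap_mem_ABSet o i.1.2⟩, i.2))
      · rintro ⟨θ, z⟩
        exact ⟨(⟨(((θ : C(X, ℝ) × C(X, ℝ))).2, ((θ : C(X, ℝ) × C(X, ℝ))).1),
          swap_mem_ABSet o θ.2⟩, z), rfl⟩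
      · rintro ⟨θ, z⟩
        show Real.exp (-(χ * dist x z)) *
            δ z ⟨((α : C(X, ℝ) × C(X, ℝ)).2, (α : C(X, ℝ) × C(X, ℝ)).1), hα⟩
              ⟨(((θ : C(X, ℝ) × C(X, ℝ))).2, ((θ : C(X, ℝ) × C(X, ℝ))).1), swap_mem_ABSet o θ.2⟩
          = Real.exp (-(χ * dist x z)) * δ z α θ
        rw [h7 z α θ hα (swap_mem_ABSet o θ.2)]
      · rintro ⟨θ, z⟩
        show Real.exp (-(χ * dist y z)) *
            δ z ⟨((β : C(X, ℝ) × C(X, ℝ)).2, (β : C(X, ℝ) × C(X, ℝ)).1), hβ⟩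
              ⟨(((θ : C(X, ℝ) × C(X, ℝ))).2, ((θ : C(X, ℝ) × C(X, ℝ))).1), swap_mem_ABSet o θ.2⟩
          = Real.exp (-(χ * dist y z)) * δ z β θ
        rw [h7 z β θ hβ (swap_mem_ABSet o θ.2)]
    show dist x y + _ = dist x y + _
    rw [hΔeq]
  · refine ⟨1, one_pos, fun x α β => ?_⟩
    have hval : dist x x + dD o B χ δ (α, x) (β, x) = δ x α β := by
      rw [dist_self, zero_add, hdiag]
    constructor
    · show 1 * δ x α β ≤ dist x x + dD o B χ δ (α, x) (β, x)
      rw [one_mul, hval]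
    · show dist x x + dD o B χ δ (α, x) (β, x) ≤ δ x α β
      rw [hval]


end
end
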